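/- arXiv:1310.1286 — 9 statements merged into one kernel-verified Lean document; each statement's English description precedes it below -/
import Mathlib

section
/- Let n ≥ 1, let p, q > 1 with 1/p + 1/q = 1, and let (a_k)_{k=1}^n and (b_k)_{k=1}^n be positive non-increasing sequences with 0 < a ≤ a_k ≤ A < ∞ and 0 < b ≤ b_k ≤ B < ∞ for all k. Then (∑_{k=1}^n (-1)^{k+1} a_k^q)^{1/q} · (∑_{k=1}^n (-1)^{k+1} b_k^p)^{1/p} ≤ (A^{q-1}/b + B^{p-1}/a) · ∑_{k=1}^n (-1)^{k+1} a_k b_k. -/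
open Finset

/-- Alternating sum of a nonneg nonincreasing sequence is nonneg; with extra info for odd n. -/
lemma alt_nonneg_aux (c : ℕ → ℝ) : ∀ (n : ℕ), (∀ k, 1 ≤ k → k ≤ n → 0 ≤ c k) →
    (∀ k, 1 ≤ k → k < n → c (k + 1) ≤ c k) →
    0 ≤ ∑ k ∈ Finset.Icc 1 n, (-1 : ℝ) ^ (k + 1) * c k ∧
      (Odd n → c n ≤ ∑ k ∈ Finset.Icc 1 n, (-1 : ℝ) ^ (k + 1) * c k) := by
  intro n
  induction n with
  | zero => simp
  | succ m ih =>
    intro hnn hmono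
    obtain ⟨h0, hodd⟩ := ih (fun k hk hk' => hnn k hk (by omega))
      (fun k hk hk' => hmono k hk (by omega))
    rw [Finset.sum_Icc_succ_top (by omega : 1 ≤ m + 1)]
    have hsign : (-1 : ℝ) ^ (m + 1 + 1) = (-1) ^ m := by
      rw [pow_succ, pow_succ]; ring
    rw [hsign]
    rcases Nat.even_or_odd m with he | ho
    · have hs : (-1 : ℝ) ^ m = 1 := he.neg_one_pow
      have hc := hnn (m + 1) (by omega) le_rfl
      rw [hs]
      constructor
      · linarith
      · intro _; linarith
    · have hs : (-1 : ℝ) ^ m = -1 := ho.neg_one_pow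
      have hm1 : 1 ≤ m := ho.pos
      have hmono' : c (m + 1) ≤ c m := hmono m hm1 (by omega)
      have hc := hodd ho
      rw [hs]
      constructor
      · linarith
      · intro h
        exfalso
        rw [Nat.odd_iff] at h ho
        omega

lemma alt_nonneg (c : ℕ → ℝ) (n : ℕ) (hnn : ∀ k, 1 ≤ k → k ≤ n → 0 ≤ c k)
    (hmono : ∀ k, 1 ≤ k → k < n → c (k + 1) ≤ c k) :
    0 ≤ ∑ k ∈ Finset.Icc 1 n, (-1 : ℝ) ^ (k + 1) * c k :=
  (alt_nonneg_aux c n hnn hmono).1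

/-- Gradient inequality for rpow: `x ^ q - y ^ q ≤ q * A ^ (q-1) * (x - y)`. -/
lemma rpow_sub_rpow_le (q A x y : ℝ) (hq : 1 ≤ q) (hy : 0 ≤ y) (hxy : y ≤ x) (hxA : x ≤ A) :
    x ^ q - y ^ q ≤ q * A ^ (q - 1) * (x - y) := by
  have hx : 0 ≤ x := hy.trans hxy
  have hA : 0 ≤ A := hx.trans hxA
  rcases eq_or_lt_of_le hx with hx0 | hx0
  · have : x = 0 := hx0.symm
    have hy0 : y = 0 := le_antisymm (this ▸ hxy) hy
    simp [this, hy0]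
  · -- Bernoulli with s = y/x - 1
    have hs : (-1 : ℝ) ≤ y / x - 1 := by
      have : 0 ≤ y / x := div_nonneg hy hx
      linarith
    have hb := one_add_mul_self_le_rpow_one_add hs hq
    rw [add_sub_cancel] at hb
    -- hb : 1 + q * (y / x - 1) ≤ (y / x) ^ q
    have hxq : (0:ℝ) < x ^ q := Real.rpow_pos_of_pos hx0 q
    have hdiv : (y / x) ^ q = y ^ q / x ^ q := Real.div_rpow hy hx q
    rw [hdiv] at hb
    have hb2 : x ^ q * (1 + q * (y / x - 1)) ≤ y ^ q := by
      rw [mul_comm]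
      calc (1 + q * (y / x - 1)) * x ^ q ≤ (y ^ q / x ^ q) * x ^ q :=
            mul_le_mul_of_nonneg_right hb hxq.le
        _ = y ^ q := by field_simp
    have hxq1 : x ^ q = x ^ (q - 1) * x := by
      rw [← Real.rpow_add_one (ne_of_gt hx0)]
      ring_nf
    have hxqy : x ^ q * (y / x) = x ^ (q - 1) * y := by
      rw [hxq1]; field_simp
    -- expand: x^q * (1 + q*(y/x - 1)) = x^q + q*(x^{q-1}*y - x^q)
    have hexp : x ^ q * (1 + q * (y / x - 1)) = x ^ q + q * (x ^ (q-1) * y - x ^ q) := by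
      have : x ^ q * (1 + q * (y / x - 1)) = x ^ q + q * (x ^ q * (y / x) - x ^ q) := by ring
      rw [this, hxqy]
    rw [hexp] at hb2
    -- so x^q - y^q ≤ q * x^{q-1} * (x - y)
    have key : x ^ q - y ^ q ≤ q * x ^ (q - 1) * (x - y) := by
      have : q * x ^ (q-1) * (x - y) = q * (x ^ q - x ^ (q-1) * y) := by rw [hxq1]; ring
      rw [this]; linarith
    refine key.trans ?_
    have hxA' : x ^ (q - 1) ≤ A ^ (q - 1) :=
      Real.rpow_le_rpow hx hxA (by linarith)
    have hq0 : (0:ℝ) ≤ q := by linarith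
    have hd : 0 ≤ x - y := by linarith
    have := mul_le_mul_of_nonneg_left hxA' hq0
    exact mul_le_mul_of_nonneg_right this hd

/-- Key lemma: alternating power sum bounded by constant times alternating product sum. -/
lemma alt_rpow_le (n : ℕ) (q : ℝ) (hq : 1 ≤ q) (a b : ℕ → ℝ) (A bL : ℝ) (hbL : 0 < bL)
    (ha_mono : ∀ k, 1 ≤ k → k < n → a (k + 1) ≤ a k)
    (hb_mono : ∀ k, 1 ≤ k → k < n → b (k + 1) ≤ b k)
    (ha_bdd : ∀ k, 1 ≤ k → k ≤ n → 0 ≤ a k ∧ a k ≤ A)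
    (hb_lb : ∀ k, 1 ≤ k → k ≤ n → bL ≤ b k) :
    ∑ k ∈ Finset.Icc 1 n, (-1 : ℝ) ^ (k + 1) * a k ^ q ≤
      (q * A ^ (q - 1) / bL) * ∑ k ∈ Finset.Icc 1 n, (-1 : ℝ) ^ (k + 1) * (a k * b k) := by
  set C := q * A ^ (q - 1) / bL with hC
  rcases Nat.eq_zero_or_pos n with rfl | hn
  · simp
  have hA : 0 ≤ A := (ha_bdd 1 le_rfl hn).1.trans (ha_bdd 1 le_rfl hn).2
  have hAq : 0 ≤ A ^ (q - 1) := Real.rpow_nonneg hA _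
  have hC0 : 0 ≤ C := by
    apply div_nonneg _ hbL.le
    exact mul_nonneg (by linarith) hAq
  have key := alt_nonneg (fun k => C * (a k * b k) - a k ^ q) n ?_ ?_
  · have hsum : ∑ k ∈ Finset.Icc 1 n, (-1 : ℝ) ^ (k + 1) * (C * (a k * b k) - a k ^ q)
        = C * (∑ k ∈ Finset.Icc 1 n, (-1 : ℝ) ^ (k + 1) * (a k * b k))
          - ∑ k ∈ Finset.Icc 1 n, (-1 : ℝ) ^ (k + 1) * a k ^ q := by
      rw [Finset.mul_sum, ← Finset.sum_sub_distrib]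
      exact Finset.sum_congr rfl fun k _ => by ring
    rw [hsum] at key
    linarith
  · -- nonneg
    intro k hk1 hkn
    obtain ⟨ha0, haA⟩ := ha_bdd k hk1 hkn
    have hb0 : bL ≤ b k := hb_lb k hk1 hkn
    have hbpos : 0 < b k := lt_of_lt_of_le hbL hb0
    have h1 : a k ^ q = a k ^ (q - 1) * a k := by
      rcases eq_or_lt_of_le ha0 with h | h
      · rw [← h]
        rw [Real.zero_rpow (by linarith : q ≠ 0)]
        ring
      · rw [← Real.rpow_add_one (ne_of_gt h)]; ring_nf
    have h2 : a k ^ (q - 1) ≤ A ^ (q - 1) := Real.rpow_le_rpow ha0 haA (by linarith)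
    have h3 : a k ^ q ≤ A ^ (q - 1) * a k := by
      rw [h1]; exact mul_le_mul_of_nonneg_right h2 ha0
    have h4 : A ^ (q - 1) * a k ≤ (A ^ (q - 1) / bL) * (a k * b k) := by
      rw [div_mul_eq_mul_div, le_div_iff₀ hbL]
      have : A ^ (q - 1) * a k * bL = A ^ (q - 1) * (a k * bL) := by ring
      rw [this]
      have := mul_le_mul_of_nonneg_left (mul_le_mul_of_nonneg_left hb0 ha0) hAq
      calc A ^ (q-1) * (a k * bL) ≤ A ^ (q-1) * (a k * b k) := this
        _ = A ^ (q-1) * (a k * b k) := rfl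
    have h5 : (A ^ (q - 1) / bL) * (a k * b k) ≤ C * (a k * b k) := by
      have h5' : A ^ (q - 1) / bL ≤ C := by
        rw [hC]
        gcongr
        exact le_mul_of_one_le_left hAq hq
      exact mul_le_mul_of_nonneg_right h5' (mul_nonneg ha0 hbpos.le)
    linarith
  · -- monotone
    intro k hk1 hkn
    obtain ⟨ha0k, haAk⟩ := ha_bdd k hk1 (by omega)
    obtain ⟨ha0k1, _⟩ := ha_bdd (k + 1) (by omega) (by omega)
    have hbk : bL ≤ b k := hb_lb k hk1 (by omega)
    have hbk1 : bL ≤ b (k + 1) := hb_lb (k + 1) (by omega) (by omega)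
    have hak : a (k + 1) ≤ a k := ha_mono k hk1 hkn
    have hbk' : b (k + 1) ≤ b k := hb_mono k hk1 hkn
    have hprod : bL * (a k - a (k + 1)) ≤ a k * b k - a (k + 1) * b (k + 1) := by
      have e1 : a k * b k - a (k + 1) * b (k + 1)
          = (a k - a (k + 1)) * b k + a (k + 1) * (b k - b (k + 1)) := by ring
      rw [e1]
      have t1 : bL * (a k - a (k + 1)) ≤ (a k - a (k + 1)) * b k := by
        rw [mul_comm]
        exact mul_le_mul_of_nonneg_left hbk (by linarith)
      have t2 : 0 ≤ a (k + 1) * (b k - b (k + 1)) :=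
        mul_nonneg ha0k1 (by linarith)
      linarith
    have hpow : a k ^ q - a (k + 1) ^ q ≤ q * A ^ (q - 1) * (a k - a (k + 1)) :=
      rpow_sub_rpow_le q A (a k) (a (k + 1)) hq ha0k1 hak haAk
    have hCb : C * bL = q * A ^ (q - 1) := by
      rw [hC, div_mul_cancel₀ _ hbL.ne']
    nlinarith [mul_le_mul_of_nonneg_left hprod hC0]

/-- Theorem 1 (right-hand side): reverse Hölder-type inequality with alternating signs. -/
theorem alternating_holder (n : ℕ) (hn : 1 ≤ n) (p q : ℝ) (hp : 1 < p) (hq : 1 < q)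
    (hpq : 1 / p + 1 / q = 1) (a b : ℕ → ℝ) (aL A bL B : ℝ)
    (haL : 0 < aL) (hbL : 0 < bL)
    (ha_mono : ∀ k, 1 ≤ k → k < n → a (k + 1) ≤ a k)
    (hb_mono : ∀ k, 1 ≤ k → k < n → b (k + 1) ≤ b k)
    (ha_bdd : ∀ k, 1 ≤ k → k ≤ n → aL ≤ a k ∧ a k ≤ A)
    (hb_bdd : ∀ k, 1 ≤ k → k ≤ n → bL ≤ b k ∧ b k ≤ B) :
    (∑ k ∈ Finset.Icc 1 n, (-1 : ℝ) ^ (k + 1) * a k ^ q) ^ (1 / q) *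
      (∑ k ∈ Finset.Icc 1 n, (-1 : ℝ) ^ (k + 1) * b k ^ p) ^ (1 / p) ≤
    (A ^ (q - 1) / bL + B ^ (p - 1) / aL) *
      ∑ k ∈ Finset.Icc 1 n, (-1 : ℝ) ^ (k + 1) * (a k * b k) := by
  have ha_nn : ∀ k, 1 ≤ k → k ≤ n → 0 ≤ a k ∧ a k ≤ A :=
    fun k h1 h2 => ⟨haL.le.trans (ha_bdd k h1 h2).1, (ha_bdd k h1 h2).2⟩
  have hb_nn : ∀ k, 1 ≤ k → k ≤ n → 0 ≤ b k ∧ b k ≤ B :=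
    fun k h1 h2 => ⟨hbL.le.trans (hb_bdd k h1 h2).1, (hb_bdd k h1 h2).2⟩
  have hA : 0 < A := lt_of_lt_of_le haL ((ha_bdd 1 le_rfl hn).1.trans (ha_bdd 1 le_rfl hn).2)
  have hB : 0 < B := lt_of_lt_of_le hbL ((hb_bdd 1 le_rfl hn).1.trans (hb_bdd 1 le_rfl hn).2)
  set X := ∑ k ∈ Finset.Icc 1 n, (-1 : ℝ) ^ (k + 1) * a k ^ q with hX
  set Y := ∑ k ∈ Finset.Icc 1 n, (-1 : ℝ) ^ (k + 1) * b k ^ p with hY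
  set Z := ∑ k ∈ Finset.Icc 1 n, (-1 : ℝ) ^ (k + 1) * (a k * b k) with hZ
  set CA := q * A ^ (q - 1) / bL with hCA
  set CB := p * B ^ (p - 1) / aL with hCB
  have hX0 : 0 ≤ X := alt_nonneg _ n
    (fun k h1 h2 => Real.rpow_nonneg (ha_nn k h1 h2).1 q)
    (fun k h1 h2 => Real.rpow_le_rpow (ha_nn (k+1) (by omega) (by omega)).1
      (ha_mono k h1 h2) (by linarith))
  have hY0 : 0 ≤ Y := alt_nonneg _ n
    (fun k h1 h2 => Real.rpow_nonneg (hb_nn k h1 h2).1 p)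
    (fun k h1 h2 => Real.rpow_le_rpow (hb_nn (k+1) (by omega) (by omega)).1
      (hb_mono k h1 h2) (by linarith))
  have hZ0 : 0 ≤ Z := alt_nonneg _ n
    (fun k h1 h2 => mul_nonneg (ha_nn k h1 h2).1 (hb_nn k h1 h2).1)
    (fun k h1 h2 => mul_le_mul (ha_mono k h1 h2) (hb_mono k h1 h2)
      (hb_nn (k+1) (by omega) (by omega)).1 (ha_nn k h1 (by omega)).1)
  have hXZ : X ≤ CA * Z := alt_rpow_le n q hq.le a b A bL hbL ha_mono hb_mono ha_nn
    (fun k h1 h2 => (hb_bdd k h1 h2).1)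
  have hYZ : Y ≤ CB * Z := by
    have := alt_rpow_le n p hp.le b a B aL haL hb_mono ha_mono hb_nn
      (fun k h1 h2 => (ha_bdd k h1 h2).1)
    have hcomm : ∑ k ∈ Finset.Icc 1 n, (-1 : ℝ) ^ (k + 1) * (b k * a k)
        = ∑ k ∈ Finset.Icc 1 n, (-1 : ℝ) ^ (k + 1) * (a k * b k) :=
      Finset.sum_congr rfl fun k _ => by ring
    rw [hcomm] at this
    exact this
  have hCA0 : 0 ≤ CA := div_nonneg (mul_nonneg (by linarith) (Real.rpow_nonneg hA.le _)) hbL.le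
  have hCB0 : 0 ≤ CB := div_nonneg (mul_nonneg (by linarith) (Real.rpow_nonneg hB.le _)) haL.le
  -- step 1: X^{1/q} Y^{1/p} ≤ (CA Z)^{1/q} (CB Z)^{1/p}
  have h1 : X ^ (1/q) * Y ^ (1/p) ≤ (CA * Z) ^ (1/q) * ((CB * Z) ^ (1/p)) := by
    apply mul_le_mul
    · exact Real.rpow_le_rpow hX0 hXZ (by positivity)
    · exact Real.rpow_le_rpow hY0 hYZ (by positivity)
    · exact Real.rpow_nonneg hY0 _
    · exact Real.rpow_nonneg (mul_nonneg hCA0 hZ0) _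
  have h2 : (CA * Z) ^ (1/q) * ((CB * Z) ^ (1/p)) = CA ^ (1/q) * CB ^ (1/p) * Z := by
    rw [Real.mul_rpow hCA0 hZ0, Real.mul_rpow hCB0 hZ0]
    have : Z ^ (1/q) * Z ^ (1/p) = Z := by
      rw [← Real.rpow_add' hZ0 (by rw [add_comm]; rw [hpq]; norm_num)]
      rw [add_comm, hpq, Real.rpow_one]
    calc CA ^ (1/q) * Z ^ (1/q) * (CB ^ (1/p) * Z ^ (1/p))
        = CA ^ (1/q) * CB ^ (1/p) * (Z ^ (1/q) * Z ^ (1/p)) := by ring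
      _ = CA ^ (1/q) * CB ^ (1/p) * Z := by rw [this]
  -- step 2: Young
  have hconj : Real.HolderConjugate q p := Real.holderConjugate_iff.mpr ⟨hq, by rw [add_comm] at hpq; simpa using hpq⟩
  have hyoung : CA ^ (1/q) * CB ^ (1/p) ≤ CA / q + CB / p := by
    have hYI := Real.young_inequality_of_nonneg (Real.rpow_nonneg hCA0 (1/q))
      (Real.rpow_nonneg hCB0 (1/p)) hconj
    have e1 : (CA ^ (1/q)) ^ q = CA := by
      rw [← Real.rpow_mul hCA0, one_div, inv_mul_cancel₀ (by linarith : q ≠ 0), Real.rpow_one]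
    have e2 : (CB ^ (1/p)) ^ p = CB := by
      rw [← Real.rpow_mul hCB0, one_div, inv_mul_cancel₀ (by linarith : p ≠ 0), Real.rpow_one]
    rwa [e1, e2] at hYI
  have hfinal : CA / q + CB / p = A ^ (q - 1) / bL + B ^ (p - 1) / aL := by
    rw [hCA, hCB]
    field_simp
  calc X ^ (1/q) * Y ^ (1/p) ≤ CA ^ (1/q) * CB ^ (1/p) * Z := by rw [← h2]; exact h1
    _ ≤ (CA / q + CB / p) * Z := mul_le_mul_of_nonneg_right hyoung hZ0
    _ = (A ^ (q - 1) / bL + B ^ (p - 1) / aL) * Z := by rw [hfinal]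
end

section
/- For every even n ≥ 2 and every q > 1 there exist positive non-increasing sequences (a_k)_{k=1}^n and (b_k)_{k=1}^n such that ∑_{k=1}^n (-1)^{k+1} a_k^q = 0 while ∑_{k=1}^n (-1)^{k+1} a_k b_k > 0. Consequently, the quotient ((∑ (-1)^{k+1} a_k^q)^{1/q} (∑ (-1)^{k+1} b_k^p)^{1/p}) / (∑ (-1)^{k+1} a_k b_k) cannot be bounded from below by any positive constant. -/
lemma alt_sum_one (m : ℕ) : ∑ k ∈ Finset.Icc 1 (2*m), (-1:ℝ)^(k+1) = 0 := by
  induction m with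
  | zero => simp
  | succ m ih =>
    have h : 2*(m+1) = (2*m + 1) + 1 := by ring
    rw [h, Finset.sum_Icc_succ_top (by omega), Finset.sum_Icc_succ_top (by omega), ih]
    rw [(by exact ⟨m+1, by omega⟩ : Even (2*m+1+1)).neg_one_pow,
      (by exact ⟨m+1, by omega⟩ : Odd (2*m+1+1+1)).neg_one_pow]
    ring

lemma alt_sum_id (m : ℕ) : ∑ k ∈ Finset.Icc 1 (2*m), (-1:ℝ)^(k+1) * k = -m := by
  induction m with
  | zero => simp
  | succ m ih =>
    have h : 2*(m+1) = (2*m + 1) + 1 := by ring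
    rw [h, Finset.sum_Icc_succ_top (by omega), Finset.sum_Icc_succ_top (by omega), ih]
    rw [(by exact ⟨m+1, by omega⟩ : Even (2*m+1+1)).neg_one_pow,
      (by exact ⟨m+1, by omega⟩ : Odd (2*m+1+1+1)).neg_one_pow]
    push_cast
    ring

/-- Theorem 1 (left-hand side): for every even `n ≥ 2` and `q > 1` there exist positive
non-increasing sequences whose alternating sum of `q`-th powers vanishes while the
alternating sum of products is positive, so the Hölder quotient has no positive lower bound. -/
theorem alternating_holder_no_lower_bound (n : ℕ) (hn : 2 ≤ n) (hne : Even n)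
    (q : ℝ) (hq : 1 < q) :
    ∃ a b : ℕ → ℝ,
      (∀ k, 1 ≤ k → k ≤ n → 0 < a k) ∧
      (∀ k, 1 ≤ k → k ≤ n → 0 < b k) ∧
      (∀ k, 1 ≤ k → k < n → a (k + 1) ≤ a k) ∧
      (∀ k, 1 ≤ k → k < n → b (k + 1) ≤ b k) ∧
      (∑ k ∈ Finset.Icc 1 n, (-1 : ℝ) ^ (k + 1) * a k ^ q = 0) ∧
      (0 < ∑ k ∈ Finset.Icc 1 n, (-1 : ℝ) ^ (k + 1) * (a k * b k)) := by
  obtain ⟨m, hm⟩ := hne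
  have hn2 : n = 2 * m := by omega
  subst hn2
  have hm1 : 1 ≤ m := by omega
  refine ⟨fun _ => 1, fun k => (2*m : ℝ) + 1 - k, ?_, ?_, ?_, ?_, ?_, ?_⟩
  · intro k _ _; norm_num
  · intro k _ hk
    have : (k:ℝ) ≤ 2*m := by exact_mod_cast hk
    push_cast
    linarith
  · intro k _ _; exact le_refl 1
  · intro k _ _; simp only []; push_cast; linarith
  · rw [← alt_sum_one m]
    refine Finset.sum_congr rfl fun k _ => ?_
    rw [Real.one_rpow, mul_one]
  · have expand : ∀ k ∈ Finset.Icc 1 (2*m), (-1:ℝ)^(k+1) * (1 * ((2*m:ℝ)+1-k))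
        = ((2*m:ℝ)+1) * ((-1:ℝ)^(k+1)) - (-1:ℝ)^(k+1) * k := by
      intro k _; ring
    rw [Finset.sum_congr rfl expand, Finset.sum_sub_distrib, ← Finset.mul_sum,
      alt_sum_one, alt_sum_id]
    have : (1:ℝ) ≤ m := by exact_mod_cast hm1
    linarith
end

section
/- Let n ≥ 1 and let (a_k)_{k=1}^n and (b_k)_{k=1}^n be positive non-increasing sequences with 0 < a ≤ a_k ≤ A < ∞ and 0 < b ≤ b_k ≤ B < ∞ for all k, and assume in addition that the sequence (a_k/b_k)_{k=1}^n is monotone (non-increasing or non-decreasing). Then (∑_{k=1}^n (-1)^{k+1} a_k²) · (∑_{k=1}^n (-1)^{k+1} b_k²) ≤ c² · (∑_{k=1}^n (-1)^{k+1} a_k b_k)², where c = (1/2) · max{A/a + a/A, B/b + b/B}. -/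
set_option maxHeartbeats 1000000

open Finset

private lemma chain_mono (n : ℕ) (F : ℕ → ℝ)
    (h : ∀ k, 1 ≤ k → k < n → F (k + 1) ≤ F k) :
    ∀ k l, 1 ≤ k → k ≤ l → l ≤ n → F l ≤ F k := by
  intro k l hk hkl
  induction l, hkl using Nat.le_induction with
  | base => intro _; exact le_rfl
  | succ l hl ih =>
    intro hln
    exact (h l (hk.trans hl) (by omega)).trans (ih (by omega))

private lemma alt_sum_aux (F : ℕ → ℝ) :
    ∀ n, 1 ≤ n → (∀ k, 1 ≤ k → k ≤ n → 0 ≤ F k) →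
    (∀ k, 1 ≤ k → k < n → F (k + 1) ≤ F k) →
    (if n % 2 = 1 then F n else 0) ≤ ∑ k ∈ Icc 1 n, (-1 : ℝ) ^ (k + 1) * F k := by
  intro n hn
  induction n, hn using Nat.le_induction with
  | base => intro h0 _; simp
  | succ n hn ih =>
    intro h0 hmono
    have ihs := ih (fun k hk hkn => h0 k hk (by omega))
      (fun k hk hkn => hmono k hk (by omega))
    rw [Finset.sum_Icc_succ_top (by omega : 1 ≤ n + 1)]
    rcases Nat.even_or_odd n with he | ho
    · have h2 : ((-1 : ℝ)) ^ (n + 1 + 1) = 1 :=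
        (he.add (by norm_num : Even 2)).neg_one_pow
      have hif : ¬ (n % 2 = 1) := by
        have := Nat.even_iff.mp he; omega
      have hn1 : (n + 1) % 2 = 1 := by
        have := Nat.even_iff.mp he; omega
      rw [if_neg hif] at ihs
      rw [if_pos hn1, h2]
      linarith
    · have h2 : ((-1 : ℝ)) ^ (n + 1 + 1) = -1 :=
        (ho.add_even (by norm_num : Even 2)).neg_one_pow
      have hif : n % 2 = 1 := Nat.odd_iff.mp ho
      have hn1 : ¬ ((n + 1) % 2 = 1) := by omega
      rw [if_pos hif] at ihs
      rw [if_neg hn1, h2]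
      have hd : F (n + 1) ≤ F n := hmono n hn (by omega)
      linarith

private lemma alt_sum_nonneg (n : ℕ) (hn : 1 ≤ n) (F : ℕ → ℝ)
    (h0 : ∀ k, 1 ≤ k → k ≤ n → 0 ≤ F k)
    (hmono : ∀ k, 1 ≤ k → k < n → F (k + 1) ≤ F k) :
    0 ≤ ∑ k ∈ Icc 1 n, (-1 : ℝ) ^ (k + 1) * F k := by
  refine le_trans ?_ (alt_sum_aux F n hn h0 hmono)
  split_ifs with h
  · exact h0 n hn le_rfl
  · exact le_rfl

private lemma core (n : ℕ) (hn : 1 ≤ n) (a b : ℕ → ℝ) (ρ : ℝ) (hρ1 : 1 ≤ ρ)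
    (hapos : ∀ k, 1 ≤ k → k ≤ n → 0 < a k)
    (hbpos : ∀ k, 1 ≤ k → k ≤ n → 0 < b k)
    (ha : ∀ k, 1 ≤ k → k < n → a (k + 1) ≤ a k)
    (hb : ∀ k, 1 ≤ k → k < n → b (k + 1) ≤ b k)
    (hab : ∀ k, 1 ≤ k → k < n → a (k + 1) / b (k + 1) ≤ a k / b k)
    (hρ : a 1 * b n ≤ ρ * (a n * b 1)) :
    (∑ k ∈ Icc 1 n, (-1 : ℝ) ^ (k + 1) * a k ^ 2) *
      (∑ k ∈ Icc 1 n, (-1 : ℝ) ^ (k + 1) * b k ^ 2) ≤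
    ((1 / 2) * (ρ + 1 / ρ)) ^ 2 *
      (∑ k ∈ Icc 1 n, (-1 : ℝ) ^ (k + 1) * (a k * b k)) ^ 2 := by
  have hb1 : 0 < b 1 := hbpos 1 le_rfl hn
  have hbn : 0 < b n := hbpos n hn le_rfl
  have ha1 : 0 < a 1 := hapos 1 le_rfl hn
  have han : 0 < a n := hapos n hn le_rfl
  set Sa := ∑ k ∈ Icc 1 n, (-1 : ℝ) ^ (k + 1) * a k ^ 2 with hSa
  set Sb := ∑ k ∈ Icc 1 n, (-1 : ℝ) ^ (k + 1) * b k ^ 2 with hSb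
  set Sab := ∑ k ∈ Icc 1 n, (-1 : ℝ) ^ (k + 1) * (a k * b k) with hSab
  set m := a n / b n with hm_def
  set p := a 1 / b 1 with hp_def
  set u := 2 * p - m with hu_def
  have hm : 0 < m := div_pos han hbn
  have hrat_lo : ∀ k, 1 ≤ k → k ≤ n → m ≤ a k / b k := fun k hk hkn =>
    chain_mono n (fun j => a j / b j) hab k n hk hkn le_rfl
  have hrat_hi : ∀ k, 1 ≤ k → k ≤ n → a k / b k ≤ p := fun k hk hkn =>
    chain_mono n (fun j => a j / b j) hab 1 k le_rfl hk hkn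
  have hmp : m ≤ p := (hrat_lo 1 le_rfl hn).trans (hrat_hi 1 le_rfl hn)
  have hpu : p ≤ u := by rw [hu_def]; linarith
  have hu0 : 0 < u := lt_of_lt_of_le hm (hmp.trans hpu)
  have hlo : ∀ k, 1 ≤ k → k ≤ n → m * b k ≤ a k := by
    intro k hk hkn
    have h := hrat_lo k hk hkn
    have hbk := hbpos k hk hkn
    rw [le_div_iff₀ hbk] at h; exact h
  have hhi : ∀ k, 1 ≤ k → k ≤ n → a k ≤ p * b k := by
    intro k hk hkn
    have h := hrat_hi k hk hkn
    have hbk := hbpos k hk hkn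
    rw [div_le_iff₀ hbk] at h; linarith
  set G : ℕ → ℝ := fun k => (a k - m * b k) * (u * b k - a k) with hG
  have hGnn : ∀ k, 1 ≤ k → k ≤ n → 0 ≤ G k := by
    intro k hk hkn
    have h1 := hlo k hk hkn
    have h2 := hhi k hk hkn
    have hbk := hbpos k hk hkn
    have h3 : a k ≤ u * b k :=
      h2.trans (mul_le_mul_of_nonneg_right hpu hbk.le)
    simp only [hG]
    exact mul_nonneg (by linarith) (by linarith)
  have hGmono : ∀ k, 1 ≤ k → k < n → G (k + 1) ≤ G k := by
    intro k hk hkn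
    have hy : 0 < b k := hbpos k hk (by omega)
    have hy' : 0 < b (k + 1) := hbpos (k + 1) (by omega) (by omega)
    have hyy : b (k + 1) ≤ b k := hb k hk hkn
    have hcross : a (k + 1) * b k ≤ a k * b (k + 1) := by
      have h := hab k hk hkn
      rw [div_le_div_iff₀ hy' hy] at h; exact h
    have hx_hi : a k ≤ p * b k := hhi k hk (by omega)
    have hx'_hi : a (k + 1) ≤ p * b (k + 1) := hhi (k + 1) (by omega) (by omega)
    have hG0 : 0 ≤ G k := hGnn k hk (by omega)
    have hfac1 : 0 ≤ (b k ^ 2 - b (k + 1) ^ 2) * G k :=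
      mul_nonneg (by nlinarith) hG0
    have hfac2 : 0 ≤ (a k * b (k + 1) - a (k + 1) * b k) *
        (2 * p * b k * b (k + 1) - a k * b (k + 1) - a (k + 1) * b k) := by
      apply mul_nonneg (by linarith)
      nlinarith [mul_le_mul_of_nonneg_right hx_hi hy'.le,
        mul_le_mul_of_nonneg_right hx'_hi hy.le]
    have hid : b k ^ 2 * (G k - G (k + 1)) =
        (b k ^ 2 - b (k + 1) ^ 2) * G k +
        (a k * b (k + 1) - a (k + 1) * b k) *
          (2 * p * b k * b (k + 1) - a k * b (k + 1) - a (k + 1) * b k) := by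
      simp only [hG, hu_def]; ring
    have hpos : 0 ≤ b k ^ 2 * (G k - G (k + 1)) := by
      rw [hid]; linarith
    have hb2 : 0 < b k ^ 2 := pow_pos hy 2
    nlinarith [hpos, hb2]
  have hGsum : 0 ≤ ∑ k ∈ Icc 1 n, (-1 : ℝ) ^ (k + 1) * G k :=
    alt_sum_nonneg n hn G hGnn hGmono
  have hGeq : ∑ k ∈ Icc 1 n, (-1 : ℝ) ^ (k + 1) * G k
      = (m + u) * Sab - Sa - m * u * Sb := by
    rw [hSa, hSb, hSab, Finset.mul_sum, Finset.mul_sum]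
    rw [← Finset.sum_sub_distrib, ← Finset.sum_sub_distrib]
    apply Finset.sum_congr rfl
    intro k _
    simp only [hG]; ring
  have hkey : Sa + m * u * Sb ≤ (m + u) * Sab := by
    rw [hGeq] at hGsum; linarith
  have hSa0 : 0 ≤ Sa := by
    apply alt_sum_nonneg n hn
    · intro k hk hkn; positivity
    · intro k hk hkn
      have h1 := ha k hk hkn
      have h2 := (hapos (k + 1) (by omega) (by omega)).le
      nlinarith
  have hSb0 : 0 ≤ Sb := by
    apply alt_sum_nonneg n hn
    · intro k hk hkn; positivity
    · intro k hk hkn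
      have h1 := hb k hk hkn
      have h2 := (hbpos (k + 1) (by omega) (by omega)).le
      nlinarith
  have hmu : 0 < m * u := mul_pos hm hu0
  have hSab0 : 0 ≤ Sab := by
    have h1 : 0 ≤ Sa + m * u * Sb := by positivity
    nlinarith
  have hAM : 4 * (m * u) * (Sa * Sb) ≤ (Sa + m * u * Sb) ^ 2 := by
    nlinarith [sq_nonneg (Sa - m * u * Sb)]
  have hsq : (Sa + m * u * Sb) ^ 2 ≤ (m + u) ^ 2 * Sab ^ 2 := by
    have h1 : 0 ≤ Sa + m * u * Sb := by positivity
    nlinarith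
  have hρ0 : 0 < ρ := lt_of_lt_of_le one_pos hρ1
  have hpρm : p ≤ ρ * m := by
    have h : a 1 / b 1 ≤ (ρ * a n) / b n := by
      rw [div_le_div_iff₀ hb1 hbn]; nlinarith
    calc p = a 1 / b 1 := hp_def
    _ ≤ (ρ * a n) / b n := h
    _ = ρ * m := by rw [hm_def]; ring
  have hconst : (m + u) ^ 2 * ρ ^ 2 ≤ (m * u) * (ρ ^ 2 + 1) ^ 2 := by
    rcases eq_or_lt_of_le hρ1 with hρe | hρlt
    · have hpm : p ≤ m := by rw [← hρe] at hpρm; linarith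
      rw [hu_def, ← hρe]
      nlinarith [sq_nonneg (p - m)]
    · have hg1 : 0 ≤ p - m := sub_nonneg.2 hmp
      have hg2 : 0 ≤ ρ * m - p := sub_nonneg.2 hpρm
      have hg3 : 0 ≤ ρ - 1 := by linarith
      have hc : 0 < (ρ - 1) * m := mul_pos (by linarith) hm
      have hE : 0 ≤ (ρ - 1) * m *
          (m * (2 * p - m) * (ρ ^ 2 + 1) ^ 2 - 4 * ρ ^ 2 * p ^ 2) := by
        have hid : (ρ - 1) * m *
            (m * (2 * p - m) * (ρ ^ 2 + 1) ^ 2 - 4 * ρ ^ 2 * p ^ 2)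
            = 4 * ρ ^ 2 * ((ρ - 1) * m) * ((p - m) * (ρ * m - p))
              + (ρ * m - p) * (m ^ 2 * ((ρ - 1) * (ρ + 1)) ^ 2)
              + (p - m) * (m ^ 2 * (ρ - 1) ^ 3 * (2 * ρ ^ 2 + ρ + 1)) := by
          ring
        rw [hid]
        have t1 : 0 ≤ 4 * ρ ^ 2 * ((ρ - 1) * m) * ((p - m) * (ρ * m - p)) := by
          apply mul_nonneg (mul_nonneg (by positivity) hc.le) (mul_nonneg hg1 hg2)
        have t2 : 0 ≤ (ρ * m - p) * (m ^ 2 * ((ρ - 1) * (ρ + 1)) ^ 2) :=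
          mul_nonneg hg2 (by positivity)
        have t3 : 0 ≤ (p - m) * (m ^ 2 * (ρ - 1) ^ 3 * (2 * ρ ^ 2 + ρ + 1)) := by
          apply mul_nonneg hg1
          apply mul_nonneg (mul_nonneg (by positivity) (by positivity)) (by positivity)
        linarith
      have hE' : 0 ≤ m * (2 * p - m) * (ρ ^ 2 + 1) ^ 2 - 4 * ρ ^ 2 * p ^ 2 := by
        nlinarith [hE, hc]
      rw [hu_def]
      nlinarith [hE']
  have e1 : ((1 : ℝ) / 2 * (ρ + 1 / ρ)) ^ 2 = (ρ ^ 2 + 1) ^ 2 / (4 * ρ ^ 2) := by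
    field_simp; ring
  rw [e1, div_mul_eq_mul_div, le_div_iff₀ (by positivity : (0:ℝ) < 4 * ρ ^ 2)]
  have h1 : (m * u) * (4 * ρ ^ 2 * (Sa * Sb)) ≤ (m * u) * ((ρ ^ 2 + 1) ^ 2 * Sab ^ 2) := by
    nlinarith [mul_le_mul_of_nonneg_right hconst (sq_nonneg Sab),
      mul_le_mul_of_nonneg_right (hAM.trans hsq) (sq_nonneg ρ)]
  have h2 := le_of_mul_le_mul_left h1 hmu
  linarith

/-- Proposition 1: Cauchy-type inequality with alternating signs. -/
theorem alternating_cauchy (n : ℕ) (hn : 1 ≤ n) (a b : ℕ → ℝ) (aL A bL B : ℝ)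
    (haL : 0 < aL) (hbL : 0 < bL)
    (ha_mono : ∀ k, 1 ≤ k → k < n → a (k + 1) ≤ a k)
    (hb_mono : ∀ k, 1 ≤ k → k < n → b (k + 1) ≤ b k)
    (ha_bdd : ∀ k, 1 ≤ k → k ≤ n → aL ≤ a k ∧ a k ≤ A)
    (hb_bdd : ∀ k, 1 ≤ k → k ≤ n → bL ≤ b k ∧ b k ≤ B)
    (hab_mono :
      (∀ k, 1 ≤ k → k < n → a (k + 1) / b (k + 1) ≤ a k / b k) ∨
      (∀ k, 1 ≤ k → k < n → a k / b k ≤ a (k + 1) / b (k + 1))) :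
    (∑ k ∈ Finset.Icc 1 n, (-1 : ℝ) ^ (k + 1) * a k ^ 2) *
      (∑ k ∈ Finset.Icc 1 n, (-1 : ℝ) ^ (k + 1) * b k ^ 2) ≤
    ((1 / 2) * max (A / aL + aL / A) (B / bL + bL / B)) ^ 2 *
      (∑ k ∈ Finset.Icc 1 n, (-1 : ℝ) ^ (k + 1) * (a k * b k)) ^ 2 := by
  have hapos : ∀ k, 1 ≤ k → k ≤ n → 0 < a k := fun k hk hkn =>
    lt_of_lt_of_le haL (ha_bdd k hk hkn).1
  have hbpos : ∀ k, 1 ≤ k → k ≤ n → 0 < b k := fun k hk hkn =>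
    lt_of_lt_of_le hbL (hb_bdd k hk hkn).1
  have hA : 0 < A := lt_of_lt_of_le (hapos 1 le_rfl hn) (ha_bdd 1 le_rfl hn).2
  have hB : 0 < B := lt_of_lt_of_le (hbpos 1 le_rfl hn) (hb_bdd 1 le_rfl hn).2
  have hbmono' : b n ≤ b 1 := chain_mono n b hb_mono 1 n le_rfl hn le_rfl
  have hamono' : a n ≤ a 1 := chain_mono n a ha_mono 1 n le_rfl hn le_rfl
  have hmax0 : 0 ≤ (1 / 2) * max (A / aL + aL / A) (B / bL + bL / B) := by
    have : (0:ℝ) ≤ A / aL + aL / A := by positivity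
    have h2 := le_max_left (A / aL + aL / A) (B / bL + bL / B)
    linarith
  have hSab2 : 0 ≤ (∑ k ∈ Finset.Icc 1 n, (-1 : ℝ) ^ (k + 1) * (a k * b k)) ^ 2 :=
    sq_nonneg _
  rcases hab_mono with hd | hi
  · -- a/b non-increasing, use ρ = A / aL
    have hρ1 : (1:ℝ) ≤ A / aL := by
      rw [le_div_iff₀ haL]
      calc (1:ℝ) * aL = aL := one_mul aL
      _ ≤ a 1 := (ha_bdd 1 le_rfl hn).1
      _ ≤ A := (ha_bdd 1 le_rfl hn).2
    have hρ : a 1 * b n ≤ (A / aL) * (a n * b 1) := by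
      have h1 : a 1 * b n ≤ A * b 1 :=
        mul_le_mul (ha_bdd 1 le_rfl hn).2 hbmono' (hbpos n hn le_rfl).le hA.le
      have h2 : A * b 1 ≤ (A / aL) * (a n * b 1) := by
        rw [div_mul_eq_mul_div, le_div_iff₀ haL]
        have h3 := (ha_bdd n hn le_rfl).1
        have h4 : 0 ≤ A * b 1 := mul_nonneg hA.le (hbpos 1 le_rfl hn).le
        nlinarith [mul_le_mul_of_nonneg_left h3 h4]
      linarith
    have hcore := core n hn a b (A / aL) hρ1 hapos hbpos ha_mono hb_mono hd hρ
    have e2 : (1:ℝ) / (A / aL) = aL / A := one_div_div A aL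
    rw [e2] at hcore
    refine hcore.trans ?_
    apply mul_le_mul_of_nonneg_right ?_ hSab2
    have hle : (1 / 2) * (A / aL + aL / A) ≤
        (1 / 2) * max (A / aL + aL / A) (B / bL + bL / B) := by
      have := le_max_left (A / aL + aL / A) (B / bL + bL / B)
      linarith
    have h0 : (0:ℝ) ≤ (1 / 2) * (A / aL + aL / A) := by positivity
    exact pow_le_pow_left₀ h0 hle 2
  · -- a/b non-decreasing, use roles swapped with ρ = B / bL
    have hd' : ∀ k, 1 ≤ k → k < n → b (k + 1) / a (k + 1) ≤ b k / a k := by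
      intro k hk hkn
      have hx := hapos k hk (by omega)
      have hx' := hapos (k + 1) (by omega) (by omega)
      have hy := hbpos k hk (by omega)
      have hy' := hbpos (k + 1) (by omega) (by omega)
      have h := hi k hk hkn
      rw [div_le_div_iff₀ hy hy'] at h
      rw [div_le_div_iff₀ hx' hx]
      nlinarith
    have hρ1 : (1:ℝ) ≤ B / bL := by
      rw [le_div_iff₀ hbL]
      calc (1:ℝ) * bL = bL := one_mul bL
      _ ≤ b 1 := (hb_bdd 1 le_rfl hn).1
      _ ≤ B := (hb_bdd 1 le_rfl hn).2
    have hρ : b 1 * a n ≤ (B / bL) * (b n * a 1) := by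
      have h1 : b 1 * a n ≤ B * a 1 :=
        mul_le_mul (hb_bdd 1 le_rfl hn).2 hamono' (hapos n hn le_rfl).le hB.le
      have h2 : B * a 1 ≤ (B / bL) * (b n * a 1) := by
        rw [div_mul_eq_mul_div, le_div_iff₀ hbL]
        have h3 := (hb_bdd n hn le_rfl).1
        have h4 : 0 ≤ B * a 1 := mul_nonneg hB.le (hapos 1 le_rfl hn).le
        nlinarith [mul_le_mul_of_nonneg_left h3 h4]
      linarith
    have hcore := core n hn b a (B / bL) hρ1 hbpos hapos hb_mono ha_mono hd' hρ
    have e2 : (1:ℝ) / (B / bL) = bL / B := one_div_div B bL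
    rw [e2] at hcore
    have e3 : (∑ k ∈ Finset.Icc 1 n, (-1 : ℝ) ^ (k + 1) * (b k * a k)) =
        ∑ k ∈ Finset.Icc 1 n, (-1 : ℝ) ^ (k + 1) * (a k * b k) := by
      apply Finset.sum_congr rfl; intro k _; ring
    rw [e3, mul_comm (∑ k ∈ Finset.Icc 1 n, (-1 : ℝ) ^ (k + 1) * b k ^ 2)] at hcore
    refine hcore.trans ?_
    apply mul_le_mul_of_nonneg_right ?_ hSab2
    have hle : (1 / 2) * (B / bL + bL / B) ≤
        (1 / 2) * max (A / aL + aL / A) (B / bL + bL / B) := by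
      have := le_max_right (A / aL + aL / A) (B / bL + bL / B)
      linarith
    have h0 : (0:ℝ) ≤ (1 / 2) * (B / bL + bL / B) := by positivity
    exact pow_le_pow_left₀ h0 hle 2
end

section
/- Let r and R be positive integers with r ≤ R, let n ≥ 0, and let (x_k)_{k=1}^{2n+1} be a non-increasing sequence with 0 < x ≤ x_k ≤ X < ∞ for all k. Then (∑_{k=1}^{2n+1} (-1)^{k+1} x_k^r)^{1/r} ≤ (∑_{k=1}^{2n+1} (-1)^{k+1} x_k^R)^{1/R}. -/
open Finset

private lemma key_convex {p a b c : ℝ} (hp : 1 ≤ p) (hc : 0 ≤ c) (hcb : c ≤ b)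
    (hba : b ≤ a) : (a - b + c) ^ p ≤ a ^ p - b ^ p + c ^ p := by
  rcases eq_or_lt_of_le (hcb.trans hba) with h | h
  · have hb : b = a := le_antisymm hba (h ▸ hcb)
    have hc2 : c = a := h
    rw [hb, hc2]
    have e : a - a + a = a := by ring
    rw [e]; linarith
  · have hca : 0 < a - c := by linarith
    set l : ℝ := (b - c) / (a - c) with hl
    have hl0 : 0 ≤ l := div_nonneg (by linarith) hca.le
    have hl1 : l ≤ 1 := by rw [hl, div_le_one hca]; linarith
    have ha0 : (0:ℝ) ≤ a := hc.trans (hcb.trans hba)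
    have hconv := (convexOn_rpow hp).2
    have hb_eq : b = l * a + (1 - l) * c := by
      rw [hl]; field_simp; ring
    have hs_eq : a - b + c = (1 - l) * a + l * c := by
      rw [hl]; field_simp; ring
    have h1 := hconv (Set.mem_Ici.2 ha0) (Set.mem_Ici.2 hc)
      (by linarith : (0:ℝ) ≤ 1 - l) hl0 (by ring)
    have h2 := hconv (Set.mem_Ici.2 ha0) (Set.mem_Ici.2 hc)
      hl0 (by linarith : (0:ℝ) ≤ 1 - l) (by ring)
    simp only [smul_eq_mul] at h1 h2
    rw [← hs_eq] at h1
    rw [← hb_eq] at h2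
    linarith

/-- positivity and upper bound for the alternating sum of a window. -/
private lemma alt_sum_bounds (r : ℕ) (x : ℕ → ℝ) :
    ∀ n m, (∀ j, j ≤ 2 * n → 0 < x (m + j)) →
      (∀ j, j < 2 * n → x (m + j + 1) ≤ x (m + j)) →
      0 < ∑ j ∈ range (2 * n + 1), (-1 : ℝ) ^ j * x (m + j) ^ r ∧
        ∑ j ∈ range (2 * n + 1), (-1 : ℝ) ^ j * x (m + j) ^ r ≤ x m ^ r := by
  intro n
  induction n with
  | zero =>
    intro m hpos _
    simp only [Nat.mul_zero, Nat.zero_add, Finset.sum_range_one, pow_zero, one_mul,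
      Nat.add_zero]
    exact ⟨pow_pos (hpos 0 (by omega)) r, le_refl _⟩
  | succ n ih =>
    intro m hpos hmono
    have hpeel : ∑ j ∈ range (2 * (n + 1) + 1), (-1 : ℝ) ^ j * x (m + j) ^ r
        = (∑ j ∈ range (2 * n + 1), (-1 : ℝ) ^ j * x ((m + 2) + j) ^ r)
          + (x m ^ r - x (m + 1) ^ r) := by
      have h1 : 2 * (n + 1) + 1 = (2 * n + 1) + 1 + 1 := by omega
      rw [h1, Finset.sum_range_succ', Finset.sum_range_succ']
      have : ∀ j, (-1 : ℝ) ^ (j + 1 + 1) * x (m + (j + 1 + 1)) ^ r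
          = (-1 : ℝ) ^ j * x ((m + 2) + j) ^ r := by
        intro j
        have e1 : m + (j + 1 + 1) = (m + 2) + j := by omega
        have e2 : ((-1 : ℝ)) ^ (j + 1 + 1) = (-1 : ℝ) ^ j := by
          rw [pow_succ, pow_succ]; ring
        rw [e1, e2]
      rw [Finset.sum_congr rfl (fun j _ => this j)]
      simp [pow_succ]
      ring
    have htail := ih (m + 2)
      (fun j hj => by have := hpos (j + 2) (by omega); simpa [show m + 2 + j = m + (j+2) by omega] using this)
      (fun j hj => by
        have := hmono (j + 2) (by omega)
        simpa [show m + 2 + j = m + (j+2) by omega] using this)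
    have hm01 : x (m + 1) ≤ x m := by
      have := hmono 0 (by omega); simpa using this
    have hm12 : x (m + 2) ≤ x (m + 1) := by
      have := hmono 1 (by omega); simpa [show m + 1 + 1 = m + 2 by omega] using this
    have hpos1 : 0 < x (m + 1) := hpos 1 (by omega)
    have hpow01 : x (m + 1) ^ r ≤ x m ^ r :=
      pow_le_pow_left₀ hpos1.le hm01 r
    have hpow12 : x (m + 2) ^ r ≤ x (m + 1) ^ r :=
      pow_le_pow_left₀ (hpos 2 (by omega)).le hm12 r
    rw [hpeel]
    constructor
    · have := htail.1; linarith
    · have := htail.2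
      have : ∑ j ∈ range (2 * n + 1), (-1 : ℝ) ^ j * x ((m + 2) + j) ^ r
          ≤ x (m + 1) ^ r := le_trans htail.2 hpow12
      linarith

/-- comparison of alternating power sums (Szegő step). -/
private lemma alt_sum_rpow_le (r R : ℕ) (hr : 0 < r) (hrR : r ≤ R) (x : ℕ → ℝ) :
    ∀ n m, (∀ j, j ≤ 2 * n → 0 < x (m + j)) →
      (∀ j, j < 2 * n → x (m + j + 1) ≤ x (m + j)) →
      (∑ j ∈ range (2 * n + 1), (-1 : ℝ) ^ j * x (m + j) ^ r) ^ ((R : ℝ) / (r : ℝ))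
        ≤ ∑ j ∈ range (2 * n + 1), (-1 : ℝ) ^ j * x (m + j) ^ R := by
  have hr' : (0:ℝ) < (r:ℝ) := by exact_mod_cast hr
  have hp1 : 1 ≤ (R : ℝ) / (r : ℝ) := by
    rw [le_div_iff₀ hr']; exact_mod_cast by simpa using hrR
  have hpow_eq : ∀ t : ℝ, 0 < t → (t ^ r) ^ ((R : ℝ) / (r : ℝ)) = t ^ R := by
    intro t ht
    rw [← Real.rpow_natCast t r, ← Real.rpow_natCast t R,
      ← Real.rpow_mul ht.le]
    congr 1
    field_simp
  intro n
  induction n with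
  | zero =>
    intro m hpos _
    simp only [Nat.mul_zero, Nat.zero_add, Finset.sum_range_one, pow_zero, one_mul,
      Nat.add_zero]
    exact le_of_eq (hpow_eq _ (hpos 0 (by omega)))
  | succ n ih =>
    intro m hpos hmono
    have hpeel : ∀ s : ℕ, ∑ j ∈ range (2 * (n + 1) + 1), (-1 : ℝ) ^ j * x (m + j) ^ s
        = (∑ j ∈ range (2 * n + 1), (-1 : ℝ) ^ j * x ((m + 2) + j) ^ s)
          + (x m ^ s - x (m + 1) ^ s) := by
      intro s
      have h1 : 2 * (n + 1) + 1 = (2 * n + 1) + 1 + 1 := by omega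
      rw [h1, Finset.sum_range_succ', Finset.sum_range_succ']
      have : ∀ j, (-1 : ℝ) ^ (j + 1 + 1) * x (m + (j + 1 + 1)) ^ s
          = (-1 : ℝ) ^ j * x ((m + 2) + j) ^ s := by
        intro j
        have e1 : m + (j + 1 + 1) = (m + 2) + j := by omega
        have e2 : ((-1 : ℝ)) ^ (j + 1 + 1) = (-1 : ℝ) ^ j := by
          rw [pow_succ, pow_succ]; ring
        rw [e1, e2]
      rw [Finset.sum_congr rfl (fun j _ => this j)]
      simp [pow_succ]
      ring
    have hpos' : ∀ j, j ≤ 2 * n → 0 < x ((m + 2) + j) := fun j hj => by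
      have := hpos (j + 2) (by omega)
      simpa [show m + 2 + j = m + (j+2) by omega] using this
    have hmono' : ∀ j, j < 2 * n → x ((m + 2) + j + 1) ≤ x ((m + 2) + j) := fun j hj => by
      have := hmono (j + 2) (by omega)
      simpa [show m + 2 + j = m + (j+2) by omega] using this
    have htail_r := alt_sum_bounds r x n (m + 2) hpos' hmono'
    have hIH := ih (m + 2) hpos' hmono'
    set Cr := ∑ j ∈ range (2 * n + 1), (-1 : ℝ) ^ j * x ((m + 2) + j) ^ r with hCr
    set CR := ∑ j ∈ range (2 * n + 1), (-1 : ℝ) ^ j * x ((m + 2) + j) ^ R with hCR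
    have hm01 : x (m + 1) ≤ x m := by
      have := hmono 0 (by omega); simpa using this
    have hm12 : x (m + 2) ≤ x (m + 1) := by
      have := hmono 1 (by omega); simpa [show m + 1 + 1 = m + 2 by omega] using this
    have hpos0 : 0 < x m := hpos 0 (by simpa using (by omega : 0 ≤ 2 * (n+1)))
    have hpos1 : 0 < x (m + 1) := hpos 1 (by omega)
    have hpos2 : 0 < x (m + 2) := hpos 2 (by omega)
    have hpow01 : x (m + 1) ^ r ≤ x m ^ r := pow_le_pow_left₀ hpos1.le hm01 r
    have hpow12 : x (m + 2) ^ r ≤ x (m + 1) ^ r := pow_le_pow_left₀ hpos2.le hm12 r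
    have hCrb : Cr ≤ x (m + 1) ^ r := le_trans htail_r.2 hpow12
    have hkey := key_convex (a := x m ^ r) (b := x (m + 1) ^ r) (c := Cr)
      hp1 htail_r.1.le hCrb hpow01
    rw [hpeel r, hpeel R]
    have hfin : (x m ^ r - x (m + 1) ^ r + Cr) ^ ((R : ℝ) / (r : ℝ))
        ≤ CR + (x m ^ R - x (m + 1) ^ R) := by
      have e1 := hpow_eq (x m) hpos0
      have e2 := hpow_eq (x (m + 1)) hpos1
      have hCrp : Cr ^ ((R : ℝ) / (r : ℝ)) ≤ CR := hIH
      calc (x m ^ r - x (m + 1) ^ r + Cr) ^ ((R : ℝ) / (r : ℝ))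
          ≤ (x m ^ r) ^ ((R : ℝ) / (r : ℝ)) - (x (m + 1) ^ r) ^ ((R : ℝ) / (r : ℝ))
            + Cr ^ ((R : ℝ) / (r : ℝ)) := hkey
        _ ≤ CR + (x m ^ R - x (m + 1) ^ R) := by rw [e1, e2]; linarith
    have e3 : Cr + (x m ^ r - x (m + 1) ^ r) = x m ^ r - x (m + 1) ^ r + Cr := by ring
    rw [e3]
    exact hfin

/-- The left-hand inequality in (geom) of the paper: for a non-increasing positive
sequence `x_1 ≥ ... ≥ x_(2n+1)` and positive integers `r ≤ R`, the `r`-mean alternating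
sum is at most the `R`-mean alternating sum. -/
theorem alternating_power_mean_le (r R : ℕ) (hr : 0 < r) (hrR : r ≤ R) (n : ℕ)
    (x : ℕ → ℝ) (xl X : ℝ) (hxl : 0 < xl)
    (hx_mono : ∀ k, 1 ≤ k → k < 2 * n + 1 → x (k + 1) ≤ x k)
    (hx_bdd : ∀ k, 1 ≤ k → k ≤ 2 * n + 1 → xl ≤ x k ∧ x k ≤ X) :
    (∑ k ∈ Finset.Icc 1 (2 * n + 1), (-1 : ℝ) ^ (k + 1) * x k ^ r) ^ (1 / (r : ℝ)) ≤
      (∑ k ∈ Finset.Icc 1 (2 * n + 1), (-1 : ℝ) ^ (k + 1) * x k ^ R) ^ (1 / (R : ℝ)) := by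
  have hR : 0 < R := lt_of_lt_of_le hr hrR
  have hpos : ∀ j, j ≤ 2 * n → 0 < x (1 + j) := fun j hj =>
    lt_of_lt_of_le hxl ((hx_bdd (1 + j) (by omega) (by omega)).1)
  have hmono : ∀ j, j < 2 * n → x (1 + j + 1) ≤ x (1 + j) := fun j hj =>
    hx_mono (1 + j) (by omega) (by omega)
  have hconv : ∀ s : ℕ, ∑ k ∈ Finset.Icc 1 (2 * n + 1), (-1 : ℝ) ^ (k + 1) * x k ^ s
      = ∑ j ∈ range (2 * n + 1), (-1 : ℝ) ^ j * x (1 + j) ^ s := by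
    intro s
    rw [← Finset.Ico_add_one_right_eq_Icc, Finset.sum_Ico_eq_sum_range]
    have h1 : 2 * n + 1 + 1 - 1 = 2 * n + 1 := by omega
    rw [h1]
    refine Finset.sum_congr rfl fun j _ => ?_
    have : ((-1 : ℝ)) ^ (1 + j + 1) = (-1 : ℝ) ^ j := by
      have : 1 + j + 1 = j + 2 := by omega
      rw [this, pow_succ, pow_succ]; ring
    rw [this]
  rw [hconv r, hconv R]
  set Sr := ∑ j ∈ range (2 * n + 1), (-1 : ℝ) ^ j * x (1 + j) ^ r with hSr
  set SR := ∑ j ∈ range (2 * n + 1), (-1 : ℝ) ^ j * x (1 + j) ^ R with hSR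
  have hSrpos := (alt_sum_bounds r x n 1 hpos hmono).1
  have hmain : Sr ^ ((R : ℝ) / (r : ℝ)) ≤ SR :=
    alt_sum_rpow_le r R hr hrR x n 1 hpos hmono
  have hr' : (0:ℝ) < (r:ℝ) := by exact_mod_cast hr
  have hR' : (0:ℝ) < (R:ℝ) := by exact_mod_cast hR
  calc Sr ^ (1 / (r : ℝ))
      = (Sr ^ ((R : ℝ) / (r : ℝ))) ^ (1 / (R : ℝ)) := by
        rw [← Real.rpow_mul hSrpos.le]
        congr 1
        field_simp
      _ ≤ SR ^ (1 / (R : ℝ)) := by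
        apply Real.rpow_le_rpow (Real.rpow_nonneg hSrpos.le _) hmain
        positivity
end

section
/- Let n ≥ 0, let p ≥ 1, and let (b_k)_{k=1}^{2n+1} be a non-increasing sequence with 0 < b ≤ b_k ≤ B < ∞ for all k. Then ∑_{k=1}^{2n+1} (-1)^{k+1} b_k ≤ (∑_{k=1}^{2n+1} (-1)^{k+1} b_k^p)^{1/p} ≤ (1/b + B^{p-1}) · ∑_{k=1}^{2n+1} (-1)^{k+1} b_k. -/
open Finset Real

private lemma mvt_rpow {p : ℝ} (hp : 1 ≤ p) {c b B : ℝ} (hc : 0 ≤ c) (hcb : c ≤ b)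
    (hbB : b ≤ B) : b ^ p - c ^ p ≤ p * B ^ (p - 1) * (b - c) := by
  rcases eq_or_lt_of_le hcb with rfl | hlt
  · simp
  obtain ⟨ξ, hξ, hslope⟩ := exists_hasDerivAt_eq_slope (fun x => x ^ p)
    (fun x => p * x ^ (p - 1)) hlt
    (fun x _ => (Real.continuousAt_rpow_const x p (Or.inr (by linarith))).continuousWithinAt)
    (fun x _ => Real.hasDerivAt_rpow_const (Or.inr hp))
  rw [eq_div_iff (sub_ne_zero.mpr hlt.ne')] at hslope
  rw [← hslope]
  have h1 : ξ ^ (p - 1) ≤ B ^ (p - 1) :=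
    Real.rpow_le_rpow (hc.trans hξ.1.le) (hξ.2.le.trans hbB) (by linarith)
  have hp0 : (0:ℝ) ≤ p := by linarith
  nlinarith [sub_nonneg.mpr hcb, mul_le_mul_of_nonneg_right
    (mul_le_mul_of_nonneg_left h1 hp0) (sub_nonneg.mpr hcb)]

private lemma diff_mono_rpow {p : ℝ} (hp : 1 ≤ p) {x y d : ℝ} (hx : 0 ≤ x) (hxy : x ≤ y)
    (hd : 0 ≤ d) : (x + d) ^ p - x ^ p ≤ (y + d) ^ p - y ^ p := by
  rcases eq_or_lt_of_le hxy with rfl | hlt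
  · exact le_rfl
  have hder : ∀ t : ℝ, HasDerivAt (fun t : ℝ => (t + d) ^ p - t ^ p)
      (p * (t + d) ^ (p - 1) * 1 - p * t ^ (p - 1)) t := by
    intro t
    exact ((Real.hasDerivAt_rpow_const (Or.inr hp)).comp t
      ((hasDerivAt_id t).add_const d)).sub (Real.hasDerivAt_rpow_const (Or.inr hp))
  obtain ⟨ξ, hξ, hslope⟩ := exists_hasDerivAt_eq_slope (fun t : ℝ => (t + d) ^ p - t ^ p)
    (fun t => p * (t + d) ^ (p - 1) * 1 - p * t ^ (p - 1)) hlt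
    (fun t _ => (hder t).continuousAt.continuousWithinAt)
    (fun t _ => hder t)
  have hξ0 : 0 ≤ ξ := hx.trans hξ.1.le
  have h1 : ξ ^ (p - 1) ≤ (ξ + d) ^ (p - 1) :=
    Real.rpow_le_rpow hξ0 (by linarith) (by linarith)
  have hp0 : (0:ℝ) ≤ p := by linarith
  have hnum : 0 ≤ ((y + d) ^ p - y ^ p - ((x + d) ^ p - x ^ p)) / (y - x) := by
    rw [← hslope]
    nlinarith [mul_le_mul_of_nonneg_left h1 hp0]
  have := div_nonneg_iff.mp hnum
  rcases this with ⟨h, _⟩ | ⟨_, h⟩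
  · linarith
  · nlinarith [sub_pos.mpr hlt]

private lemma aux_alt (p : ℝ) (hp : 1 ≤ p) (B : ℝ) (b : ℕ → ℝ) :
    ∀ n : ℕ, (∀ k, 1 ≤ k → k < 2 * n + 1 → b (k + 1) ≤ b k) →
      (∀ k, 1 ≤ k → k ≤ 2 * n + 1 → 0 ≤ b k ∧ b k ≤ B) →
      b (2 * n + 1) ≤ (∑ k ∈ Finset.Icc 1 (2 * n + 1), (-1 : ℝ) ^ (k + 1) * b k) ∧
      (∑ k ∈ Finset.Icc 1 (2 * n + 1), (-1 : ℝ) ^ (k + 1) * b k) ^ p ≤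
        (∑ k ∈ Finset.Icc 1 (2 * n + 1), (-1 : ℝ) ^ (k + 1) * b k ^ p) ∧
      (∑ k ∈ Finset.Icc 1 (2 * n + 1), (-1 : ℝ) ^ (k + 1) * b k ^ p) - b (2 * n + 1) ^ p ≤
        p * B ^ (p - 1) *
          ((∑ k ∈ Finset.Icc 1 (2 * n + 1), (-1 : ℝ) ^ (k + 1) * b k) - b (2 * n + 1)) := by
  intro n
  induction n with
  | zero =>
    intro _ _
    simp
  | succ n ih =>
    intro hmono hbdd
    have hmono' : ∀ k, 1 ≤ k → k < 2 * n + 1 → b (k + 1) ≤ b k := fun k h1 h2 =>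
      hmono k h1 (by omega)
    have hbdd' : ∀ k, 1 ≤ k → k ≤ 2 * n + 1 → 0 ≤ b k ∧ b k ≤ B := fun k h1 h2 =>
      hbdd k h1 (by omega)
    obtain ⟨ih1, ih2, ih3⟩ := ih hmono' hbdd'
    set S := ∑ k ∈ Finset.Icc 1 (2 * n + 1), (-1 : ℝ) ^ (k + 1) * b k with hS
    set T := ∑ k ∈ Finset.Icc 1 (2 * n + 1), (-1 : ℝ) ^ (k + 1) * b k ^ p with hT
    have hsplit : ∀ f : ℕ → ℝ,
        ∑ k ∈ Finset.Icc 1 (2 * n + 3), f k =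
          (∑ k ∈ Finset.Icc 1 (2 * n + 1), f k) + f (2 * n + 2) + f (2 * n + 3) := by
      intro f
      have e1 : 2 * n + 3 = (2 * n + 2) + 1 := by omega
      rw [e1, Finset.sum_Icc_succ_top (by omega), Finset.sum_Icc_succ_top (by omega)]
    have sgn1 : ((-1 : ℝ)) ^ (2 * n + 2 + 1) = -1 := Odd.neg_one_pow ⟨n + 1, by ring⟩
    have sgn2 : ((-1 : ℝ)) ^ (2 * n + 3 + 1) = 1 := Even.neg_one_pow ⟨n + 2, by ring⟩
    have hidx : 2 * (n + 1) + 1 = 2 * n + 3 := by omega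
    rw [hidx, hsplit, hsplit, sgn1, sgn2]
    set u := b (2 * n + 2) with hu
    set v := b (2 * n + 3) with hv
    set w := b (2 * n + 1) with hw
    have huw : u ≤ w := hmono (2 * n + 1) (by omega) (by omega)
    have hvu : v ≤ u := hmono (2 * n + 2) (by omega) (by omega)
    have hv0 : 0 ≤ v := (hbdd (2 * n + 3) (by omega) (by omega)).1
    have hwB : w ≤ B := (hbdd' (2 * n + 1) (by omega) (by omega)).2
    have hu0 : 0 ≤ u := hv0.trans hvu
    have huS : u ≤ S := huw.trans ih1
    refine ⟨by linarith, ?_, ?_⟩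
    · -- Szegő step
      have key := diff_mono_rpow hp hv0 (by linarith : v ≤ S + -1 * u + 1 * v)
        (by linarith : (0:ℝ) ≤ u - v)
      have e1 : v + (u - v) = u := by ring
      have e2 : S + -1 * u + 1 * v + (u - v) = S := by ring
      rw [e1, e2] at key
      linarith
    · -- pair bound step
      have key := mvt_rpow hp hu0 huw hwB
      linarith



/-- Szegő's theorem for `t ↦ t^p` combined with Theorem 1 with `a_k ≡ 1`:
two-sided bound for the alternating `p`-th power sum of a positive non-increasing
sequence of odd length. -/
theorem alternating_szego_holder (n : ℕ) (p : ℝ) (hp : 1 ≤ p)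
    (b : ℕ → ℝ) (bL B : ℝ) (hbL : 0 < bL)
    (hb_mono : ∀ k, 1 ≤ k → k < 2 * n + 1 → b (k + 1) ≤ b k)
    (hb_bdd : ∀ k, 1 ≤ k → k ≤ 2 * n + 1 → bL ≤ b k ∧ b k ≤ B) :
    (∑ k ∈ Finset.Icc 1 (2 * n + 1), (-1 : ℝ) ^ (k + 1) * b k) ≤
      (∑ k ∈ Finset.Icc 1 (2 * n + 1), (-1 : ℝ) ^ (k + 1) * b k ^ p) ^ (1 / p) ∧
    (∑ k ∈ Finset.Icc 1 (2 * n + 1), (-1 : ℝ) ^ (k + 1) * b k ^ p) ^ (1 / p) ≤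
      (1 / bL + B ^ (p - 1)) *
        ∑ k ∈ Finset.Icc 1 (2 * n + 1), (-1 : ℝ) ^ (k + 1) * b k := by
  have hp0 : (0:ℝ) < p := by linarith
  obtain ⟨h1, h2, h3⟩ := aux_alt p hp B b n hb_mono
    (fun k hk1 hk2 => ⟨hbL.le.trans (hb_bdd k hk1 hk2).1, (hb_bdd k hk1 hk2).2⟩)
  set S := ∑ k ∈ Finset.Icc 1 (2 * n + 1), (-1 : ℝ) ^ (k + 1) * b k with hSdef
  set T := ∑ k ∈ Finset.Icc 1 (2 * n + 1), (-1 : ℝ) ^ (k + 1) * b k ^ p with hTdef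
  have hbN := hb_bdd (2 * n + 1) (by omega) le_rfl
  have hbLS : bL ≤ S := hbN.1.trans h1
  have hS : 0 < S := lt_of_lt_of_le hbL hbLS
  have hB : 0 < B := lt_of_lt_of_le hbL ((hb_bdd 1 le_rfl (by omega)).1.trans
    (hb_bdd 1 le_rfl (by omega)).2)
  have hT : 0 < T := lt_of_lt_of_le (Real.rpow_pos_of_pos hS p) h2
  set K := B ^ (p - 1) with hK
  have hK0 : 0 < K := Real.rpow_pos_of_pos hB _
  constructor
  · have := Real.rpow_le_rpow (Real.rpow_pos_of_pos hS p).le h2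
      (by positivity : (0:ℝ) ≤ 1 / p)
    rw [one_div] at this ⊢
    rwa [Real.rpow_rpow_inv hS.le hp0.ne'] at this
  · -- T ≤ p K S
    have hbN0 : 0 < b (2 * n + 1) := lt_of_lt_of_le hbL hbN.1
    have hNp : b (2 * n + 1) ^ p ≤ K * b (2 * n + 1) := by
      rw [show p = (p - 1) + 1 by ring, Real.rpow_add_one hbN0.ne']
      exact mul_le_mul_of_nonneg_right
        (Real.rpow_le_rpow hbN0.le hbN.2 (by linarith)) hbN0.le
    have hTpKS : T ≤ p * (K * S) := by
      have hextra : 0 ≤ (p - 1) * K * b (2 * n + 1) :=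
        mul_nonneg (mul_nonneg (by linarith) hK0.le) hbN0.le
      nlinarith [h3, hNp]
    -- Bernoulli chain
    have hY0 : 0 ≤ K * S := mul_nonneg hK0.le hS.le
    have hBern : 1 + p * (K * S) ≤ (1 + K * S) ^ p :=
      one_add_mul_self_le_rpow_one_add (by linarith) hp
    have hXge1 : 1 ≤ S / bL := (one_le_div hbL).mpr hbLS
    have hmono2 : (1 + K * S) ^ p ≤ (S / bL + K * S) ^ p :=
      Real.rpow_le_rpow (by linarith) (by linarith) hp0.le
    have hCS : (1 / bL + K) * S = S / bL + K * S := by ring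
    have hfinal : T ≤ ((1 / bL + K) * S) ^ p := by
      rw [hCS]; linarith
    have hCS0 : 0 ≤ (1 / bL + K) * S := by positivity
    have := Real.rpow_le_rpow hT.le hfinal (by positivity : (0:ℝ) ≤ 1 / p)
    rw [one_div] at this ⊢
    rwa [Real.rpow_rpow_inv hCS0 hp0.ne'] at this
end

section
/- For all real x, y ≥ 0 and p ≥ 1, the function f(x, y) = (x + y)^p − (x^p + y^p) is non-decreasing in each variable separately; that is, if 0 ≤ x' ≤ x and 0 ≤ y' ≤ y then (x' + y')^p − (x'^p + y'^p) ≤ (x + y)^p − (x^p + y^p). -/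
open Set

lemma convexOn_add_sub_le {f : ℝ → ℝ} {s : Set ℝ} (hf : ConvexOn ℝ s f)
    {a b c : ℝ} (ha : a ∈ s) (hb : b ∈ s) (hac : a + c ∈ s) (hbc : b + c ∈ s)
    (hab : a ≤ b) (hc : 0 ≤ c) :
    f (a + c) - f a ≤ f (b + c) - f b := by
  rcases eq_or_lt_of_le hc with rfl | hc
  · simp
  rcases eq_or_lt_of_le hab with rfl | hab
  · exact le_rfl
  have h1 : (f (a + c) - f a) / (a + c - a) ≤ (f (b + c) - f a) / (b + c - a) :=
    hf.secant_mono ha hac hbc (by linarith) (by linarith) (by linarith)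
  have h2 : (f a - f (b + c)) / (a - (b + c)) ≤ (f b - f (b + c)) / (b - (b + c)) :=
    hf.secant_mono hbc ha hb (by linarith) (by linarith) hab.le
  have e1 : (f a - f (b + c)) / (a - (b + c)) = (f (b + c) - f a) / (b + c - a) := by
    rw [← neg_div_neg_eq]; ring_nf
  have e2 : (f b - f (b + c)) / (b - (b + c)) = (f (b + c) - f b) / c := by
    rw [← neg_div_neg_eq]; ring_nf
  rw [e1, e2] at h2
  have hc' : a + c - a = c := by ring
  rw [hc'] at h1
  have h3 := h1.trans h2
  calc f (a + c) - f a = (f (a + c) - f a) / c * c := by field_simp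
    _ ≤ (f (b + c) - f b) / c * c := mul_le_mul_of_nonneg_right h3 hc.le
    _ = f (b + c) - f b := by field_simp

/-- The function `f(x, y) = (x + y)^p - (x^p + y^p)`, `p ≥ 1`, is non-decreasing in each
variable on non-negative reals. -/
theorem rpow_add_sub_monotone (p x y x' y' : ℝ) (hp : 1 ≤ p)
    (hx' : 0 ≤ x') (hx : x' ≤ x) (hy' : 0 ≤ y') (hy : y' ≤ y) :
    (x' + y') ^ p - (x' ^ p + y' ^ p) ≤ (x + y) ^ p - (x ^ p + y ^ p) := by
  have hcv := convexOn_rpow hp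
  have hx0 : (0:ℝ) ≤ x := hx'.trans hx
  have hy0 : (0:ℝ) ≤ y := hy'.trans hy
  have h1 : (x' + y') ^ p - x' ^ p ≤ (x + y') ^ p - x ^ p :=
    convexOn_add_sub_le hcv (mem_Ici.2 hx') (mem_Ici.2 hx0)
      (mem_Ici.2 (by linarith)) (mem_Ici.2 (by linarith)) hx hy'
  have h2 : (y' + x) ^ p - y' ^ p ≤ (y + x) ^ p - y ^ p :=
    convexOn_add_sub_le hcv (mem_Ici.2 hy') (mem_Ici.2 hy0)
      (mem_Ici.2 (by linarith)) (mem_Ici.2 (by linarith)) hy hx0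
  rw [add_comm y' x, add_comm y x] at h2
  linarith
end

section
/- Let n ≥ 1, let p ≥ 1, and let (a_k)_{k=1}^n and (b_k)_{k=1}^n be non-negative non-increasing sequences of real numbers. Then (∑_{k=1}^n (-1)^{k+1} a_k^p)^{1/p} + (∑_{k=1}^n (-1)^{k+1} b_k^p)^{1/p} ≤ 2^{1 − 1/p} · (∑_{k=1}^n (-1)^{k+1} (a_k + b_k)^p)^{1/p}. -/
/-- Alternating sum of a nonneg non-increasing sequence (range form) is nonneg. -/
lemma altSum_range_nonneg : ∀ (n : ℕ) (c : ℕ → ℝ),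
    (∀ k, 1 ≤ k → k ≤ n → 0 ≤ c k) → (∀ k, 1 ≤ k → k < n → c (k + 1) ≤ c k) →
    0 ≤ ∑ i ∈ Finset.range n, (-1 : ℝ) ^ i * c (i + 1) := by
  intro n
  induction n using Nat.strong_induction_on with
  | _ n ih =>
    match n with
    | 0 => intro c _ _; simp
    | 1 =>
      intro c h0 _
      simpa using h0 1 le_rfl le_rfl
    | (m + 2) =>
      intro c h0 hm
      rw [Finset.sum_range_succ', Finset.sum_range_succ']
      have key : ∑ i ∈ Finset.range m, (-1 : ℝ) ^ (i + 1 + 1) * c (i + 1 + 1 + 1)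
          = ∑ i ∈ Finset.range m, (-1 : ℝ) ^ i * (fun k => c (k + 2)) (i + 1) := by
        refine Finset.sum_congr rfl fun i _ => ?_
        have : (-1 : ℝ) ^ (i + 1 + 1) = (-1 : ℝ) ^ i := by
          rw [pow_succ, pow_succ]; ring
        rw [this]
      rw [key]
      have h1 : 0 ≤ ∑ i ∈ Finset.range m, (-1 : ℝ) ^ i * (fun k => c (k + 2)) (i + 1) := by
        refine ih m (by omega) (fun k => c (k + 2)) ?_ ?_
        · intro k hk1 hk2; exact h0 (k + 2) (by omega) (by omega)
        · intro k hk1 hk2; exact hm (k + 2) (by omega) (by omega)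
      have h2 : c 2 ≤ c 1 := hm 1 le_rfl (by omega)
      have h3 : 0 ≤ c 1 := h0 1 le_rfl (by omega)
      simp only [zero_add, pow_zero, pow_one, one_mul, neg_one_mul]
      linarith [h1]

/-- Alternating sum of a nonneg non-increasing sequence (Icc form) is nonneg. -/
lemma altSum_nonneg (n : ℕ) (c : ℕ → ℝ)
    (h0 : ∀ k, 1 ≤ k → k ≤ n → 0 ≤ c k) (hm : ∀ k, 1 ≤ k → k < n → c (k + 1) ≤ c k) :
    0 ≤ ∑ k ∈ Finset.Icc 1 n, (-1 : ℝ) ^ (k + 1) * c k := by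
  rw [← Finset.Ico_add_one_right_eq_Icc, Finset.sum_Ico_eq_sum_range]
  simp only [Nat.succ_sub_one, Nat.add_sub_cancel]
  have key : ∑ i ∈ Finset.range n, (-1 : ℝ) ^ (1 + i + 1) * c (1 + i)
      = ∑ i ∈ Finset.range n, (-1 : ℝ) ^ i * c (i + 1) := by
    refine Finset.sum_congr rfl fun i _ => ?_
    have : (-1 : ℝ) ^ (1 + i + 1) = (-1 : ℝ) ^ i := by
      rw [show 1 + i + 1 = i + 2 by omega, pow_succ, pow_succ]; ring
    rw [this, Nat.add_comm 1 i]
  rw [key]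
  exact altSum_range_nonneg n c h0 hm

/-- `x ↦ (x+c)^p - x^p` is monotone on `[0, ∞)` for `p ≥ 1`, `c ≥ 0`. -/
lemma shift_rpow_mono {p c : ℝ} (hp : 1 ≤ p) (hc : 0 ≤ c) {x y : ℝ}
    (hx : 0 ≤ x) (hxy : x ≤ y) : (x + c) ^ p - x ^ p ≤ (y + c) ^ p - y ^ p := by
  have hd : ∀ t : ℝ, HasDerivAt (fun s => (s + c) ^ p - s ^ p)
      (p * (t + c) ^ (p - 1) - p * t ^ (p - 1)) t := by
    intro t
    have h1 : HasDerivAt (fun s : ℝ => (s + c) ^ p) (p * (t + c) ^ (p - 1) * 1) t := by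
      exact (Real.hasDerivAt_rpow_const (Or.inr hp)).comp t ((hasDerivAt_id t).add_const c)
    have h2 : HasDerivAt (fun s : ℝ => s ^ p) (p * t ^ (p - 1)) t :=
      Real.hasDerivAt_rpow_const (Or.inr hp)
    simpa using h1.fun_sub h2
  have hmono : MonotoneOn (fun s => (s + c) ^ p - s ^ p) (Set.Ici (0 : ℝ)) := by
    apply monotoneOn_of_deriv_nonneg (convex_Ici 0)
    · exact fun t _ => ((hd t).continuousAt).continuousWithinAt
    · exact fun t _ => ((hd t).differentiableAt).differentiableWithinAt
    · intro t ht
      rw [interior_Ici] at ht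
      rw [(hd t).deriv]
      have ht' : (0 : ℝ) < t := ht
      have : t ^ (p - 1) ≤ (t + c) ^ (p - 1) :=
        Real.rpow_le_rpow ht'.le (by linarith) (by linarith)
      nlinarith [this, (le_trans zero_le_one hp)]
  exact hmono hx (le_trans hx hxy) hxy

/-- Superadditivity defect `f(a,b) = (a+b)^p - a^p - b^p` is monotone in each variable. -/
lemma defect_mono {p : ℝ} (hp : 1 ≤ p) {a₁ a₂ b₁ b₂ : ℝ}
    (ha2 : 0 ≤ a₂) (hb2 : 0 ≤ b₂) (ha : a₂ ≤ a₁) (hb : b₂ ≤ b₁) :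
    (a₂ + b₂) ^ p - a₂ ^ p - b₂ ^ p ≤ (a₁ + b₁) ^ p - a₁ ^ p - b₁ ^ p := by
  have h1 : (a₂ + b₂) ^ p - a₂ ^ p ≤ (a₁ + b₂) ^ p - a₁ ^ p :=
    shift_rpow_mono hp hb2 ha2 ha
  have h2 : (b₂ + a₁) ^ p - b₂ ^ p ≤ (b₁ + a₁) ^ p - b₁ ^ p :=
    shift_rpow_mono hp (le_trans ha2 ha) hb2 hb
  rw [add_comm b₂ a₁, add_comm b₁ a₁] at h2
  linarith

lemma defect_nonneg {p : ℝ} (hp : 1 ≤ p) {a b : ℝ} (ha : 0 ≤ a) (hb : 0 ≤ b) :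
    0 ≤ (a + b) ^ p - a ^ p - b ^ p := by
  have h := defect_mono hp (le_refl (0:ℝ)) hb ha le_rfl (b₁ := b)
  rw [Real.zero_rpow (by linarith : p ≠ 0), zero_add] at h
  linarith

/-- Concavity-type two-point inequality: `x^(1/p) + y^(1/p) ≤ 2^(1-1/p) (x+y)^(1/p)`. -/
lemma two_point {p : ℝ} (hp : 1 ≤ p) {x y : ℝ} (hx : 0 ≤ x) (hy : 0 ≤ y) :
    x ^ (1 / p) + y ^ (1 / p) ≤ (2 : ℝ) ^ (1 - 1 / p) * (x + y) ^ (1 / p) := by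
  have hp0 : (0 : ℝ) < p := lt_of_lt_of_le one_pos hp
  lift x to NNReal using hx
  lift y to NNReal using hy
  have key : (x : NNReal) ^ (1 / p) + y ^ (1 / p) ≤
      (2 : NNReal) ^ (1 - 1 / p) * (x + y) ^ (1 / p) := by
    have h := NNReal.rpow_add_le_mul_rpow_add_rpow (x ^ (1 / p)) (y ^ (1 / p)) hp
    have hx' : (x ^ (1 / p)) ^ p = x := by
      rw [← NNReal.rpow_mul, one_div, inv_mul_cancel₀ hp0.ne', NNReal.rpow_one]
    have hy' : (y ^ (1 / p)) ^ p = y := by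
      rw [← NNReal.rpow_mul, one_div, inv_mul_cancel₀ hp0.ne', NNReal.rpow_one]
    rw [hx', hy'] at h
    have h2 := NNReal.rpow_le_rpow h (le_of_lt (one_div_pos.mpr hp0))
    rw [← NNReal.rpow_mul, mul_one_div, div_self hp0.ne', NNReal.rpow_one] at h2
    calc x ^ (1 / p) + y ^ (1 / p)
        ≤ ((2 : NNReal) ^ (p - 1) * (x + y)) ^ (1 / p) := h2
      _ = (2 : NNReal) ^ (1 - 1 / p) * (x + y) ^ (1 / p) := by
          rw [NNReal.mul_rpow, ← NNReal.rpow_mul]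
          congr 2
          field_simp
  have h := NNReal.coe_le_coe.mpr key
  push_cast [NNReal.coe_rpow] at h
  exact h

/-- Theorem 2 (right-hand side): Minkowski-type inequality with alternating signs
for `p ≥ 1`, with the sharp constant `2^(1 - 1/p)`. -/
theorem alternating_minkowski (n : ℕ) (hn : 1 ≤ n) (p : ℝ) (hp : 1 ≤ p)
    (a b : ℕ → ℝ)
    (ha_nonneg : ∀ k, 1 ≤ k → k ≤ n → 0 ≤ a k)
    (hb_nonneg : ∀ k, 1 ≤ k → k ≤ n → 0 ≤ b k)
    (ha_mono : ∀ k, 1 ≤ k → k < n → a (k + 1) ≤ a k)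
    (hb_mono : ∀ k, 1 ≤ k → k < n → b (k + 1) ≤ b k) :
    (∑ k ∈ Finset.Icc 1 n, (-1 : ℝ) ^ (k + 1) * a k ^ p) ^ (1 / p) +
      (∑ k ∈ Finset.Icc 1 n, (-1 : ℝ) ^ (k + 1) * b k ^ p) ^ (1 / p) ≤
    (2 : ℝ) ^ (1 - 1 / p) *
      (∑ k ∈ Finset.Icc 1 n, (-1 : ℝ) ^ (k + 1) * (a k + b k) ^ p) ^ (1 / p) := by
  have hp0 : (0 : ℝ) < p := lt_of_lt_of_le one_pos hp
  set A := ∑ k ∈ Finset.Icc 1 n, (-1 : ℝ) ^ (k + 1) * a k ^ p with hA_def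
  set B := ∑ k ∈ Finset.Icc 1 n, (-1 : ℝ) ^ (k + 1) * b k ^ p with hB_def
  set C := ∑ k ∈ Finset.Icc 1 n, (-1 : ℝ) ^ (k + 1) * (a k + b k) ^ p with hC_def
  have hA : 0 ≤ A := by
    apply altSum_nonneg
    · intro k h1 h2; exact Real.rpow_nonneg (ha_nonneg k h1 h2) p
    · intro k h1 h2
      exact Real.rpow_le_rpow (ha_nonneg (k + 1) (by omega) (by omega))
        (ha_mono k h1 h2) hp0.le
  have hB : 0 ≤ B := by
    apply altSum_nonneg
    · intro k h1 h2; exact Real.rpow_nonneg (hb_nonneg k h1 h2) p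
    · intro k h1 h2
      exact Real.rpow_le_rpow (hb_nonneg (k + 1) (by omega) (by omega))
        (hb_mono k h1 h2) hp0.le
  have hdef : 0 ≤ ∑ k ∈ Finset.Icc 1 n,
      (-1 : ℝ) ^ (k + 1) * ((a k + b k) ^ p - a k ^ p - b k ^ p) := by
    apply altSum_nonneg
    · intro k h1 h2
      exact defect_nonneg hp (ha_nonneg k h1 h2) (hb_nonneg k h1 h2)
    · intro k h1 h2
      exact defect_mono hp (ha_nonneg (k + 1) (by omega) (by omega))
        (hb_nonneg (k + 1) (by omega) (by omega)) (ha_mono k h1 h2) (hb_mono k h1 h2)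
  have hsum : ∑ k ∈ Finset.Icc 1 n,
      (-1 : ℝ) ^ (k + 1) * ((a k + b k) ^ p - a k ^ p - b k ^ p) = C - A - B := by
    rw [hC_def, hA_def, hB_def, ← Finset.sum_sub_distrib, ← Finset.sum_sub_distrib]
    refine Finset.sum_congr rfl fun k _ => ?_
    ring
  have hABC : A + B ≤ C := by rw [hsum] at hdef; linarith
  have hC : 0 ≤ C := le_trans (by linarith) hABC
  calc A ^ (1 / p) + B ^ (1 / p)
      ≤ (2 : ℝ) ^ (1 - 1 / p) * (A + B) ^ (1 / p) := two_point hp hA hB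
    _ ≤ (2 : ℝ) ^ (1 - 1 / p) * C ^ (1 / p) := by
        apply mul_le_mul_of_nonneg_left
        · exact Real.rpow_le_rpow (by linarith) hABC (by positivity)
        · positivity
end

section
/- For every p ≥ 1 and every ε > 0 there exist n ≥ 1 and non-negative non-increasing sequences (a_k)_{k=1}^n, (b_k)_{k=1}^n with ∑_{k=1}^n (-1)^{k+1} (a_k + b_k)^p > 0 such that ((∑_{k=1}^n (-1)^{k+1} a_k^p)^{1/p} + (∑_{k=1}^n (-1)^{k+1} b_k^p)^{1/p}) / (∑_{k=1}^n (-1)^{k+1} (a_k + b_k)^p)^{1/p} > 2^{1 − 1/p} − ε. Hence the constant 2^{1 − 1/p} in the alternating Minkowski-type inequality is best possible. -/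
open Real

/-- Bernoulli consequence: `p * u^(p-1) * (1-u) ≤ 1 - u^p` for `0 < u ≤ 1`, `1 ≤ p`. -/
lemma aux_tangent_lower {p u : ℝ} (hp : 1 ≤ p) (hu0 : 0 < u) (hu1 : u ≤ 1) :
    p * u ^ (p - 1) * (1 - u) ≤ 1 - u ^ p := by
  have hs : (-1 : ℝ) ≤ (1 - u) / u :=
    le_trans (by norm_num) (div_nonneg (by linarith) hu0.le)
  have h := one_add_mul_self_le_rpow_one_add hs hp
  have h1 : 1 + (1 - u) / u = 1 / u := by field_simp; ring
  rw [h1, one_div, Real.inv_rpow hu0.le] at h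
  have hup : (0:ℝ) < u ^ p := Real.rpow_pos_of_pos hu0 p
  have hkey : u ^ p * (1 + p * ((1 - u) / u)) ≤ 1 := by
    calc u ^ p * (1 + p * ((1 - u) / u)) ≤ u ^ p * (u ^ p)⁻¹ :=
          mul_le_mul_of_nonneg_left h hup.le
      _ = 1 := mul_inv_cancel₀ hup.ne'
  have hratio : u ^ (p - 1) = u ^ p / u := Real.rpow_sub_one hu0.ne' p
  have hexp : u ^ p * (1 + p * ((1 - u) / u)) = u ^ p + p * (u ^ p / u) * (1 - u) := by
    field_simp
  rw [hexp, ← hratio] at hkey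
  linarith

/-- Bernoulli consequence: `x^p - (x-s)^p ≤ p * x^(p-1) * s` for `0 < x`, `0 ≤ s ≤ x`. -/
lemma aux_tangent_upper {p x s : ℝ} (hp : 1 ≤ p) (hx : 0 < x) (hs0 : 0 ≤ s) (hsx : s ≤ x) :
    x ^ p - (x - s) ^ p ≤ p * x ^ (p - 1) * s := by
  have hs : (-1 : ℝ) ≤ -(s / x) := by
    rw [neg_le_neg_iff]; exact (div_le_one hx).2 hsx
  have h := one_add_mul_self_le_rpow_one_add hs hp
  have h1 : 1 + -(s / x) = (x - s) / x := by field_simp; ring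
  rw [h1, Real.div_rpow (by linarith) hx.le] at h
  have hxp : (0:ℝ) < x ^ p := Real.rpow_pos_of_pos hx p
  have hkey : x ^ p * (1 + p * -(s / x)) ≤ (x - s) ^ p := by
    calc x ^ p * (1 + p * -(s / x)) ≤ x ^ p * ((x - s) ^ p / x ^ p) :=
          mul_le_mul_of_nonneg_left h hxp.le
      _ = (x - s) ^ p := by field_simp
  have hratio : x ^ (p - 1) = x ^ p / x := Real.rpow_sub_one hx.ne' p
  have hexp : x ^ p * (1 + p * -(s / x)) = x ^ p - p * (x ^ p / x) * s := by
    field_simp; ring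
  rw [hexp, ← hratio] at hkey
  linarith

lemma sum_Icc_one_three (f : ℕ → ℝ) :
    ∑ k ∈ Finset.Icc 1 3, f k = f 1 + f 2 + f 3 := by
  rw [show (3:ℕ) = 2 + 1 from rfl, Finset.sum_Icc_succ_top (by norm_num),
    show (2:ℕ) = 1 + 1 from rfl, Finset.sum_Icc_succ_top (by norm_num),
    Finset.Icc_self, Finset.sum_singleton]

/-- Sharpness of the constant `2^(1 - 1/p)` in the alternating Minkowski-type
inequality. -/
theorem alternating_minkowski_sharp (p : ℝ) (hp : 1 ≤ p) (ε : ℝ) (hε : 0 < ε) :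
    ∃ n : ℕ, 1 ≤ n ∧ ∃ a b : ℕ → ℝ,
      (∀ k, 1 ≤ k → k ≤ n → 0 ≤ a k) ∧
      (∀ k, 1 ≤ k → k ≤ n → 0 ≤ b k) ∧
      (∀ k, 1 ≤ k → k < n → a (k + 1) ≤ a k) ∧
      (∀ k, 1 ≤ k → k < n → b (k + 1) ≤ b k) ∧
      0 < ∑ k ∈ Finset.Icc 1 n, (-1 : ℝ) ^ (k + 1) * (a k + b k) ^ p ∧
      (2 : ℝ) ^ (1 - 1 / p) - ε <
        ((∑ k ∈ Finset.Icc 1 n, (-1 : ℝ) ^ (k + 1) * a k ^ p) ^ (1 / p) +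
            (∑ k ∈ Finset.Icc 1 n, (-1 : ℝ) ^ (k + 1) * b k ^ p) ^ (1 / p)) /
          (∑ k ∈ Finset.Icc 1 n, (-1 : ℝ) ^ (k + 1) * (a k + b k) ^ p) ^ (1 / p) := by
  have hp0 : (0:ℝ) < p := lt_of_lt_of_le one_pos hp
  set z : ℝ := min (1/2) (ε/5) with hzdef
  have hz0 : 0 < z := lt_min (by norm_num) (by positivity)
  have hz2 : z ≤ 1/2 := min_le_left _ _
  have hz1 : z ≤ 1 := hz2.trans (by norm_num)
  have h3z : 3 * z < ε := by
    have : z ≤ ε/5 := min_le_right _ _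
    linarith
  have hzp0 : (0:ℝ) < z ^ p := Real.rpow_pos_of_pos hz0 p
  set s : ℝ := z ^ p / p with hsdef
  have hs0 : 0 < s := div_pos hzp0 hp0
  have hps : p * s = z ^ p := by rw [hsdef]; field_simp
  have hzpz : z ^ p ≤ z := by
    calc z ^ p ≤ z ^ (1:ℝ) := Real.rpow_le_rpow_of_exponent_ge hz0 hz1 hp
      _ = z := Real.rpow_one z
  have hsz : s ≤ z := le_trans (div_le_self hzp0.le hp) hzpz
  have hs2 : s ≤ 1/2 := hsz.trans hz2
  set u : ℝ := 1 - s with hudef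
  have hu0 : 0 < u := by simp only [hudef]; linarith
  have hu1 : u ≤ 1 := by simp only [hudef]; linarith
  clear_value z s u
  refine ⟨3, by norm_num, (fun k => if k = 1 then 1 else if k = 2 then u else 0),
    (fun _ => z), ?_, ?_, ?_, ?_, ?_⟩
  · intro k h1 h3
    interval_cases k <;> simp <;> linarith
  · intro _ _ _; exact hz0.le
  · intro k h1 h3
    interval_cases k <;> simp <;> linarith
  · intro k _ _; exact le_refl z
  have hmono : (u + z) ^ p ≤ (1 + z) ^ p :=
    Real.rpow_le_rpow (by positivity) (by simp only [hudef]; linarith) hp0.le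
  have hSCpos : 0 < (1 + z) ^ p + -(u + z) ^ p + z ^ p := by linarith
  have hip0 : (0:ℝ) < p⁻¹ := by positivity
  have hc0 : (0:ℝ) < (2:ℝ) ^ p⁻¹ := Real.rpow_pos_of_pos two_pos _
  have hc1 : (1:ℝ) ≤ (2:ℝ) ^ p⁻¹ := by
    calc (1:ℝ) = 1 ^ p⁻¹ := (Real.one_rpow _).symm
      _ ≤ (2:ℝ) ^ p⁻¹ := Real.rpow_le_rpow zero_le_one one_le_two hip0.le
  have hexp1 : (p - 1) * p⁻¹ = 1 - p⁻¹ := by field_simp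
  have hexple : (p - 1) * p⁻¹ ≤ 1 := by
    rw [hexp1]; linarith
  have hzpz' : (z ^ p) ^ p⁻¹ = z := by
    rw [← Real.rpow_mul hz0.le, mul_inv_cancel₀ hp0.ne', Real.rpow_one]
  constructor
  · rw [sum_Icc_one_three]
    norm_num
    exact hSCpos
  · rw [sum_Icc_one_three, sum_Icc_one_three, sum_Icc_one_three]
    norm_num [Real.zero_rpow hp0.ne']
    set c : ℝ := (2:ℝ) ^ p⁻¹ with hcdef
    clear_value c
    -- lower bound for the `a`-sum
    have hA := aux_tangent_lower hp hu0 hu1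
    rw [show (1:ℝ) - u = s by rw [hudef]; ring] at hA
    have hA2 : u ^ (p - 1) * z ^ p ≤ 1 - u ^ p := by
      calc u ^ (p - 1) * z ^ p = p * u ^ (p - 1) * s := by rw [← hps]; ring
        _ ≤ 1 - u ^ p := hA
    have hA3 : (1 - z) * z ≤ (1 + -u ^ p) ^ p⁻¹ := by
      have hb : (u ^ (p - 1) * z ^ p) ^ p⁻¹ ≤ (1 + -u ^ p) ^ p⁻¹ :=
        Real.rpow_le_rpow (by positivity) (by linarith) hip0.le
      have heq : (u ^ (p - 1) * z ^ p) ^ p⁻¹ = u ^ ((p - 1) * p⁻¹) * z := by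
        rw [Real.mul_rpow (by positivity) hzp0.le, hzpz', ← Real.rpow_mul hu0.le]
      have h1 : u ^ (1:ℝ) ≤ u ^ ((p - 1) * p⁻¹) :=
        Real.rpow_le_rpow_of_exponent_ge hu0 hu1 hexple
      rw [Real.rpow_one] at h1
      have huz : (1:ℝ) - z ≤ u := by simp only [hudef]; linarith
      calc (1 - z) * z ≤ u ^ ((p - 1) * p⁻¹) * z := by nlinarith
        _ = (u ^ (p - 1) * z ^ p) ^ p⁻¹ := heq.symm
        _ ≤ _ := hb
    have hNum : (2 - z) * z ≤ (1 + -u ^ p) ^ p⁻¹ + (z ^ p) ^ p⁻¹ := by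
      rw [hzpz']; linarith
    -- upper bound for the denominator
    have hU := aux_tangent_upper hp (show (0:ℝ) < 1 + z by linarith) hs0.le
      (by linarith : s ≤ 1 + z)
    rw [show (1:ℝ) + z - s = u + z by rw [hudef]; ring] at hU
    have hU2 : (1 + z) ^ p - (u + z) ^ p ≤ (1 + z) ^ (p - 1) * z ^ p := by
      calc (1 + z) ^ p - (u + z) ^ p ≤ p * (1 + z) ^ (p - 1) * s := hU
        _ = (1 + z) ^ (p - 1) * z ^ p := by rw [← hps]; ring
    have h2 : (1:ℝ) ≤ (1 + z) ^ (p - 1) := by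
      calc (1:ℝ) = 1 ^ (p - 1) := (Real.one_rpow _).symm
        _ ≤ (1 + z) ^ (p - 1) := Real.rpow_le_rpow zero_le_one (by linarith) (by linarith)
    have hSC_ub : (1 + z) ^ p + -(u + z) ^ p + z ^ p ≤ 2 * ((1 + z) ^ (p - 1) * z ^ p) := by
      have h3 : z ^ p ≤ (1 + z) ^ (p - 1) * z ^ p := le_mul_of_one_le_left hzp0.le h2
      linarith
    have hDen : ((1 + z) ^ p + -(u + z) ^ p + z ^ p) ^ p⁻¹ ≤ c * (1 + z) * z := by
      calc ((1 + z) ^ p + -(u + z) ^ p + z ^ p) ^ p⁻¹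
          ≤ (2 * ((1 + z) ^ (p - 1) * z ^ p)) ^ p⁻¹ :=
            Real.rpow_le_rpow hSCpos.le hSC_ub hip0.le
        _ = c * ((1 + z) ^ ((p - 1) * p⁻¹) * z) := by
            rw [Real.mul_rpow (by norm_num) (by positivity),
              Real.mul_rpow (by positivity) hzp0.le, hzpz',
              ← Real.rpow_mul (by positivity : (0:ℝ) ≤ 1 + z), ← hcdef]
        _ ≤ c * ((1 + z) * z) := by
            have h4 : (1 + z) ^ ((p - 1) * p⁻¹) ≤ (1 + z) ^ (1:ℝ) :=
              Real.rpow_le_rpow_of_exponent_le (by linarith) hexple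
            rw [Real.rpow_one] at h4
            have h5 : (1 + z) ^ ((p - 1) * p⁻¹) * z ≤ (1 + z) * z :=
              mul_le_mul_of_nonneg_right h4 hz0.le
            exact mul_le_mul_of_nonneg_left h5 hc0.le
        _ = c * (1 + z) * z := by ring
    have hSCp : 0 < ((1 + z) ^ p + -(u + z) ^ p + z ^ p) ^ p⁻¹ :=
      Real.rpow_pos_of_pos hSCpos _
    have hdiv : (2 - z) * z / (c * (1 + z) * z) ≤
        ((1 + -u ^ p) ^ p⁻¹ + (z ^ p) ^ p⁻¹) / ((1 + z) ^ p + -(u + z) ^ p + z ^ p) ^ p⁻¹ :=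
      div_le_div₀ (le_trans (by nlinarith) hNum) hNum hSCp hDen
    have hcancel : (2 - z) * z / (c * (1 + z) * z) = (2 - z) / (c * (1 + z)) :=
      mul_div_mul_right _ _ hz0.ne'
    have h2c : (2:ℝ) ^ (1 - p⁻¹) = 2 / c := by
      rw [Real.rpow_sub two_pos, Real.rpow_one, ← hcdef]
    have hfinal : 2 / c - ε < (2 - z) / (c * (1 + z)) := by
      rw [lt_div_iff₀ (by positivity)]
      have hcc : 2 / c * c = 2 := div_mul_cancel₀ 2 hc0.ne'
      have hexp : (2 / c - ε) * (c * (1 + z)) = 2 * (1 + z) - ε * (c * (1 + z)) := by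
        calc (2 / c - ε) * (c * (1 + z)) = (2 / c * c) * (1 + z) - ε * (c * (1 + z)) := by ring
          _ = 2 * (1 + z) - ε * (c * (1 + z)) := by rw [hcc]
      rw [hexp]
      have h1c : 1 ≤ c * (1 + z) :=
        le_trans hc1 (le_mul_of_one_le_right hc0.le (by linarith))
      have hεle : ε ≤ ε * (c * (1 + z)) := le_mul_of_one_le_right hε.le h1c
      linarith
    rw [h2c]
    calc 2 / c - ε < (2 - z) / (c * (1 + z)) := hfinal
      _ = (2 - z) * z / (c * (1 + z) * z) := hcancel.symm
      _ ≤ _ := hdiv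
end

section
/- For every p > 1 and every ε > 0 there exist n ≥ 2 and non-negative non-increasing sequences (a_k)_{k=1}^n, (b_k)_{k=1}^n with ∑_{k=1}^n (-1)^{k+1} (a_k + b_k)^p > 0 such that ((∑_{k=1}^n (-1)^{k+1} a_k^p)^{1/p} + (∑_{k=1}^n (-1)^{k+1} b_k^p)^{1/p}) / (∑_{k=1}^n (-1)^{k+1} (a_k + b_k)^p)^{1/p} < ε. Hence the alternating Minkowski-type quotient admits no positive lower bound depending only on p. -/
/-- The alternating Minkowski-type quotient admits no positive lower bound depending
only on `p`. -/
theorem alternating_minkowski_no_lower_bound (p : ℝ) (hp : 1 < p) (ε : ℝ) (hε : 0 < ε) :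
    ∃ n : ℕ, 2 ≤ n ∧ ∃ a b : ℕ → ℝ,
      (∀ k, 1 ≤ k → k ≤ n → 0 ≤ a k) ∧
      (∀ k, 1 ≤ k → k ≤ n → 0 ≤ b k) ∧
      (∀ k, 1 ≤ k → k < n → a (k + 1) ≤ a k) ∧
      (∀ k, 1 ≤ k → k < n → b (k + 1) ≤ b k) ∧
      0 < ∑ k ∈ Finset.Icc 1 n, (-1 : ℝ) ^ (k + 1) * (a k + b k) ^ p ∧
      ((∑ k ∈ Finset.Icc 1 n, (-1 : ℝ) ^ (k + 1) * a k ^ p) ^ (1 / p) +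
          (∑ k ∈ Finset.Icc 1 n, (-1 : ℝ) ^ (k + 1) * b k ^ p) ^ (1 / p)) /
        (∑ k ∈ Finset.Icc 1 n, (-1 : ℝ) ^ (k + 1) * (a k + b k) ^ p) ^ (1 / p) < ε := by
  have hp0 : (0:ℝ) < p := by linarith
  have hp1 : (0:ℝ) < p - 1 := by linarith
  set c : ℝ := min 1 ε / 2 with hc
  have hc0 : 0 < c := by positivity
  have hc1 : c < 1 := by
    have : min 1 ε ≤ 1 := min_le_left _ _
    simp only [hc]; linarith
  have hcε : c < ε := by
    have : min 1 ε ≤ ε := min_le_right _ _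
    simp only [hc]; linarith
  set t : ℝ := c ^ (p / (p - 1)) with ht
  have ht0 : 0 < t := Real.rpow_pos_of_pos hc0 _
  refine ⟨2, le_refl 2, (fun _ => 1), (fun k => if k = 1 then t else 0), ?_, ?_, ?_, ?_, ?_, ?_⟩
  · intro k _ _; norm_num
  · intro k _ _; dsimp only; split
    · exact ht0.le
    · exact le_refl 0
  · intro k _ _; exact le_refl 1
  · intro k hk1 hk2; interval_cases k; simp [ht0.le]
  all_goals {
  have hIcc : Finset.Icc 1 2 = ({1, 2} : Finset ℕ) := rfl
  have hne : (1:ℕ) ≠ 2 := by norm_num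
  have hS : t ≤ (1 + t) ^ p - 1 := by
    have h1 : (1:ℝ) + t ≤ (1 + t) ^ p := by
      calc (1:ℝ) + t = (1 + t) ^ (1:ℝ) := (Real.rpow_one _).symm
        _ ≤ (1 + t) ^ p := Real.rpow_le_rpow_of_exponent_le (by linarith) hp.le
    linarith
  have hS0 : 0 < (1 + t) ^ p - 1 := lt_of_lt_of_le ht0 hS
  have hsum_ab : ∑ k ∈ Finset.Icc 1 2,
      (-1 : ℝ) ^ (k + 1) * ((1:ℝ) + (if k = 1 then t else 0)) ^ p = (1 + t) ^ p - 1 := by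
    rw [hIcc, Finset.sum_pair hne]
    norm_num [Real.one_rpow]
    ring
  first
  | · -- positivity goal
      simpa [hsum_ab] using hS0
  | · -- main inequality
      have hsum_a : ∑ k ∈ Finset.Icc 1 2, (-1 : ℝ) ^ (k + 1) * (1:ℝ) ^ p = 0 := by
        rw [hIcc, Finset.sum_pair hne]; norm_num [Real.one_rpow]
      have hsum_b : ∑ k ∈ Finset.Icc 1 2,
          (-1 : ℝ) ^ (k + 1) * (if k = 1 then t else 0 : ℝ) ^ p = t ^ p := by
        rw [hIcc, Finset.sum_pair hne]
        norm_num [Real.zero_rpow hp0.ne']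
      simp only [hsum_a, hsum_b, hsum_ab]
      rw [Real.zero_rpow (one_div_ne_zero hp0.ne'), zero_add,
        ← Real.rpow_mul ht0.le, mul_one_div_cancel hp0.ne', Real.rpow_one]
      have hD : t ^ (1/p) ≤ ((1 + t) ^ p - 1) ^ (1/p) :=
        Real.rpow_le_rpow ht0.le hS (by positivity)
      have hDt : 0 < t ^ (1/p) := Real.rpow_pos_of_pos ht0 _
      have key : t / ((1 + t) ^ p - 1) ^ (1/p) ≤ t / t ^ (1/p) := by
        gcongr
      have heq : t / t ^ (1/p) = c := by
        rw [ht, ← Real.rpow_mul hc0.le, ← Real.rpow_sub hc0,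
          show p / (p-1) - p / (p-1) * (1/p) = 1 by field_simp,
          Real.rpow_one]
      calc t / ((1 + t) ^ p - 1) ^ (1/p) ≤ t / t ^ (1/p) := key
        _ = c := heq
        _ < ε := hcε }
end
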